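/- Assume (A1) and let λ be real and close to λ₀. In both cases A(α) = A(β) and A(α) = −A(β), the connection coefficients satisfy c₂·c̃₃ = 1 + O(h) as h → 0. -/

import Mathlib

/-!
STATEMENT 6 (Lemma 3.1, first part).

Assume (A1), let `λ` be real and close to `λ₀`, and let `α < β` be the turning points
(zeros of `A² - λ²`). With exact WKB solutions `u₁ = u⁺(·;α,x₁)`, `u₂ = u⁺(·;α,x₂)`,
`ũ₂ = u⁺(·;β,x₂)`, `u₃ = u⁻(·;α,x₃)`, `ũ₃ = u⁻(·;β,x₃)`, `u₄ = u⁻(·;β,x₄)` — the base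
points `x₁,…,x₄` lying one in each of the four sectors cut out by the Stokes lines,
encoded here by the existence of paths from `x₁` to `x₃`, `x₂` to `x₃` and `x₂` to `x₄`
along which `Re z` is strictly increasing — the connection coefficients defined by
`u₁ = c₂ u₂ + c₃ u₃`, `u₄ = c̃₂ ũ₂ + c̃₃ ũ₃` satisfy `c₂ c̃₃ = 1 + O(h)` as `h → 0`,
in both cases `A(α) = ±A(β)`.
-/

open Complex Set

noncomputable section

/-- Assumption (A1). -/
structure ZSA1 (A : ℂ → ℂ) (δ lam0 α0 β0 : ℝ) : Prop where
  delta_pos : 0 < δ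
  analytic : AnalyticOnNhd ℂ A {z : ℂ | |z.im| < δ}
  real_on_real : ∀ x : ℝ, (A x).im = 0
  lam0_pos : 0 < lam0
  tp_lt : α0 < β0
  crossing : ∀ x : ℝ, |(A x).re| = lam0 ↔ (x = α0 ∨ x = β0)
  nondeg : deriv A (α0 : ℂ) * deriv A (β0 : ℂ) ≠ 0
  inside : ∀ x : ℝ, α0 < x → x < β0 → |(A x).re| < lam0
  outside : ∀ x : ℝ, (x < α0 ∨ β0 < x) → lam0 < |(A x).re|
  liminf_large : lam0 < Filter.liminf (fun x : ℝ => |(A x).re|) (Filter.cocompact ℝ)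

/-- `(we, wo)` is the pair of summed exact WKB series with sign `s = ±1` and base
point `x₀`. -/
def IsWKBSum (Ω : Set ℂ) (h : ℝ) (s : ℂ) (sq H : ℂ → ℂ) (x₀ : ℂ) (we wo : ℂ → ℂ) : Prop :=
  we x₀ = 1 ∧ wo x₀ = 0 ∧ ∀ x ∈ Ω,
    HasDerivAt we (deriv H x / H x * wo x) x ∧
    HasDerivAt wo (deriv H x / H x * we x - s * (2 * sq x / (h : ℂ)) * wo x) x

/-- The exact WKB solution `u⁺`, componentwise. -/
def wkbPlus (h : ℝ) (Z H we wo : ℂ → ℂ) (x : ℂ) : ℂ × ℂ :=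
  (Complex.exp (Z x / (h : ℂ)) *
      ((H x)⁻¹ * (wo x + we x) + Complex.I * H x * (wo x - we x)),
   Complex.exp (Z x / (h : ℂ)) *
      (-Complex.I * (H x)⁻¹ * (wo x + we x) - H x * (wo x - we x)))

/-- The exact WKB solution `u⁻`, componentwise. -/
def wkbMinus (h : ℝ) (Z H we wo : ℂ → ℂ) (x : ℂ) : ℂ × ℂ :=
  (Complex.exp (-Z x / (h : ℂ)) *
      ((H x)⁻¹ * (we x + wo x) + Complex.I * H x * (we x - wo x)),
   Complex.exp (-Z x / (h : ℂ)) *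
      (-Complex.I * (H x)⁻¹ * (we x + wo x) - H x * (we x - wo x)))

/-- There is a path from `a` to `b` inside `Ω` along which `f` is strictly
increasing (transversality to the Stokes lines). -/
def MonoPath (Ω : Set ℂ) (f : ℂ → ℝ) (a b : ℂ) : Prop :=
  ∃ p : ℝ → ℂ, ContinuousOn p (Icc 0 1) ∧ (∀ t ∈ Icc (0:ℝ) 1, p t ∈ Ω) ∧
    p 0 = a ∧ p 1 = b ∧ StrictMonoOn (fun t => f (p t)) (Icc 0 1)

namespace WKBAux

open Metric

lemma comb_extract {h : ℝ} {Zf H we1 wo1 we2 wo2 we3 wo3 : ℂ → ℂ} {cA cB : ℂ} {x : ℂ}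
    (hH : H x ≠ 0) (h3e : we3 x = 1) (h3o : wo3 x = 0)
    (heq : wkbPlus h Zf H we1 wo1 x
      = cA • wkbPlus h Zf H we2 wo2 x + cB • wkbMinus h Zf H we3 wo3 x) :
    we1 x = cA * we2 x := by
  have eq1 := congrArg Prod.fst heq
  have eq2 := congrArg Prod.snd heq
  simp only [wkbPlus, wkbMinus, Prod.smul_mk, Prod.fst_add, Prod.snd_add, smul_eq_mul,
    Prod.mk_add_mk, h3e, h3o] at eq1 eq2
  set E : ℂ := Complex.exp (Zf x / (h : ℂ)) with hE
  set E' : ℂ := Complex.exp (-Zf x / (h : ℂ)) with hE'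
  have hEne : E ≠ 0 := Complex.exp_ne_zero _
  have hkne : (H x)⁻¹ ≠ 0 := inv_ne_zero hH
  -- combo A : multiply by -2 H x
  have A : E * (wo1 x - we1 x) = cA * (E * (wo2 x - we2 x)) + cB * E' := by
    have h2 : ((-2 : ℂ) * H x) ≠ 0 := by
      simp [hH]
    apply mul_left_cancel₀ h2
    linear_combination Complex.I * eq1 + eq2 +
      (H x * (E * (we1 x - wo1 x) + cA * E * (wo2 x - we2 x) + cB * E')) * Complex.I_sq
  have B : E * (wo1 x + we1 x) = cA * (E * (wo2 x + we2 x)) + cB * E' := by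
    have h2 : ((-2 : ℂ) * Complex.I * (H x)⁻¹) ≠ 0 := by
      simp [Complex.I_ne_zero, hH]
    apply mul_left_cancel₀ h2
    linear_combination (-Complex.I) * eq1 + eq2 -
      (H x * (E * (we1 x - wo1 x) + cA * E * (wo2 x - we2 x) + cB * E')) * Complex.I_sq
  have key : E * we1 x = cA * (E * we2 x) := by linear_combination (B - A) / 2
  have := mul_left_cancel₀ hEne (by linear_combination key : E * we1 x = E * (cA * we2 x))
  exact this

lemma comb_extract' {h : ℝ} {Zf H we4 wo4 we2 wo2 we3 wo3 : ℂ → ℂ} {cA cB : ℂ} {x : ℂ}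
    (hH : H x ≠ 0) (h2e : we2 x = 1) (h2o : wo2 x = 0)
    (heq : wkbMinus h Zf H we4 wo4 x
      = cA • wkbPlus h Zf H we2 wo2 x + cB • wkbMinus h Zf H we3 wo3 x) :
    we4 x = cB * we3 x := by
  have eq1 := congrArg Prod.fst heq
  have eq2 := congrArg Prod.snd heq
  simp only [wkbPlus, wkbMinus, Prod.smul_mk, Prod.fst_add, Prod.snd_add, smul_eq_mul,
    Prod.mk_add_mk, h2e, h2o] at eq1 eq2
  set E : ℂ := Complex.exp (Zf x / (h : ℂ)) with hE
  set E' : ℂ := Complex.exp (-Zf x / (h : ℂ)) with hE'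
  have hEne : E' ≠ 0 := Complex.exp_ne_zero _
  have A : E' * (we4 x - wo4 x) = cA * (E * (0 - 1)) + cB * (E' * (we3 x - wo3 x)) := by
    have h2 : ((-2 : ℂ) * H x) ≠ 0 := by simp [hH]
    apply mul_left_cancel₀ h2
    linear_combination Complex.I * eq1 + eq2 +
      (H x * (E' * (wo4 x - we4 x) + cB * E' * (we3 x - wo3 x) - cA * E)) * Complex.I_sq
  have B : E' * (we4 x + wo4 x) = cA * (E * (0 + 1)) + cB * (E' * (we3 x + wo3 x)) := by
    have h2 : ((-2 : ℂ) * Complex.I * (H x)⁻¹) ≠ 0 := by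
      simp [Complex.I_ne_zero, hH]
    apply mul_left_cancel₀ h2
    linear_combination (-Complex.I) * eq1 + eq2 -
      (H x * (E' * (wo4 x - we4 x) + cB * E' * (we3 x - wo3 x) - cA * E)) * Complex.I_sq
  have key : E' * we4 x = cB * (E' * we3 x) := by linear_combination (A + B) / 2
  exact mul_left_cancel₀ hEne (by linear_combination key : E' * we4 x = E' * (cB * we3 x))

lemma cross_const {Ω : Set ℂ} (hΩ : IsOpen Ω) (hconn : IsPreconnected Ω)
    {φ sq : ℂ → ℂ} {h : ℝ} {up vp um vm : ℂ → ℂ}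
    (hup : ∀ x ∈ Ω, HasDerivAt up (φ x * vp x) x)
    (hvp : ∀ x ∈ Ω, HasDerivAt vp (φ x * up x - 1 * (2 * sq x / (h : ℂ)) * vp x) x)
    (hum : ∀ x ∈ Ω, HasDerivAt um (φ x * vm x) x)
    (hvm : ∀ x ∈ Ω, HasDerivAt vm (φ x * um x - (-1) * (2 * sq x / (h : ℂ)) * vm x) x)
    {x y : ℂ} (hx : x ∈ Ω) (hy : y ∈ Ω) :
    up x * um x - vp x * vm x = up y * um y - vp y * vm y := by
  set F : ℂ → ℂ := fun z => up z * um z - vp z * vm z with hF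
  have hder : ∀ z ∈ Ω, HasDerivAt F 0 z := by
    intro z hz
    have h1 := ((hup z hz).mul (hum z hz)).sub ((hvp z hz).mul (hvm z hz))
    refine h1.congr_deriv ?_
    ring
  have hdiff : DifferentiableOn ℂ F Ω := fun z hz => ((hder z hz).differentiableAt).differentiableWithinAt
  have hana : AnalyticOnNhd ℂ F Ω := hdiff.analyticOnNhd hΩ
  have hconst : AnalyticOnNhd ℂ (fun _ : ℂ => F x) Ω := analyticOnNhd_const
  have heq : EqOn F (fun _ => F x) Ω := by
    apply hana.eqOn_of_preconnected_of_eventuallyEq hconst hconn hx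
    obtain ⟨ε, hε, hball⟩ := Metric.isOpen_iff.1 hΩ x hx
    have : ∀ z ∈ Metric.ball x ε, F z = F x := by
      intro z hz
      refine (convex_ball x ε).is_const_of_fderivWithin_eq_zero (𝕜 := ℂ)
        (fun w hw => (hdiff w (hball hw)).mono hball) ?_ hz (Metric.mem_ball_self hε)
      intro w hw
      have hD : fderiv ℂ F w = 0 := by
        have := (hder w (hball hw)).hasFDerivAt.fderiv
        rw [this]; ext v; simp
      rw [fderivWithin_of_isOpen Metric.isOpen_ball hw, hD]
    filter_upwards [Metric.ball_mem_nhds x hε] with z hz using this z hz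
  exact (heq hy).symm


/-- An elementary arc inside `Ω \ Zb` along which the phase moves with constant
complex speed `Δ` with `0 < Δ.re`. -/
def ZStep (Ω Zb : Set ℂ) (sq : ℂ → ℂ) (z w : ℂ) : Prop :=
  ∃ (γ : ℝ → ℂ) (Δ : ℂ), 0 < Δ.re ∧ γ 0 = z ∧ γ 1 = w ∧
    ∀ t ∈ Icc (0:ℝ) 1, (γ t ∈ Ω \ Zb) ∧ HasDerivAt γ (Δ * (sq (γ t))⁻¹) t

lemma integral_exp_mul {c : ℝ} (hc : c ≠ 0) (t : ℝ) :
    ∫ s in (0:ℝ)..t, Real.exp (c*s) = (Real.exp (c*t) - 1)/c := by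
  have hd : ∀ s ∈ uIcc (0:ℝ) t, HasDerivAt (fun y => Real.exp (c*y)/c) (Real.exp (c*s)) s := by
    intro s _
    have h1 : HasDerivAt (fun y : ℝ => Real.exp (c*y)) (Real.exp (c*s) * c) s := by
      simpa [mul_comm] using ((hasDerivAt_id s).const_mul c).exp
    have := h1.div_const c
    simpa [mul_div_assoc, mul_div_cancel_right₀ _ hc] using this
  rw [intervalIntegral.integral_eq_sub_of_hasDerivAt hd
    ((Real.continuous_exp.comp (continuous_const.mul continuous_id)).continuousOn.intervalIntegrable)]
  field_simp
  simp

set_option maxHeartbeats 1600000 in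
lemma zstep_estimate {Ω Zb : Set ℂ} {sq φ : ℂ → ℂ}
    (hsqne : ∀ x ∈ Ω, sq x ≠ 0) (hsqc : ContinuousOn sq Ω)
    (hφc : ContinuousOn φ (Ω \ Zb))
    {z w : ℂ} (hzw : ZStep Ω Zb sq z w) :
    ∃ C : ℝ, 0 < C ∧ ∀ h : ℝ, 0 < h → ∀ u v : ℂ → ℂ,
      (∀ x ∈ Ω, HasDerivAt u (φ x * v x) x) →
      (∀ x ∈ Ω, HasDerivAt v (φ x * u x - 2 * sq x / (h:ℂ) * v x) x) →
      C * h ≤ 1 → ‖u z‖ ≤ 2 → ‖v z‖ ≤ 1 →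
      ‖u w - u z‖ ≤ C * h ∧ ‖v w‖ ≤ ‖v z‖ + C * h := by
  obtain ⟨γ, Δ, hρ, hγ0, hγ1, hγ⟩ := hzw
  set ρ : ℝ := Δ.re with hρdef
  have hγΩ : ∀ t ∈ Icc (0:ℝ) 1, γ t ∈ Ω := fun t ht => (hγ t ht).1.1
  have hγZ : ∀ t ∈ Icc (0:ℝ) 1, γ t ∈ Ω \ Zb := fun t ht => (hγ t ht).1
  have hγc : ContinuousOn γ (Icc 0 1) :=
    fun t ht => ((hγ t ht).2.continuousAt).continuousWithinAt
  -- the coefficient Ψ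
  set Ψ : ℝ → ℂ := fun t => φ (γ t) * (Δ * (sq (γ t))⁻¹) with hΨdef
  have hΨc : ContinuousOn Ψ (Icc 0 1) := by
    apply ContinuousOn.mul
    · exact hφc.comp hγc hγZ
    · exact continuousOn_const.mul
        ((hsqc.comp hγc hγΩ).inv₀ (fun t ht => hsqne _ (hγΩ t ht)))
  obtain ⟨tK, htK, hKmax⟩ := (isCompact_Icc (a := (0:ℝ)) (b := 1)).exists_isMaxOn
    (nonempty_Icc.2 zero_le_one) (hΨc.norm)
  set K : ℝ := ‖Ψ tK‖ with hKdef
  have hK : ∀ t ∈ Icc (0:ℝ) 1, ‖Ψ t‖ ≤ K := fun t ht => hKmax ht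
  have hK0 : 0 ≤ K := norm_nonneg _
  refine ⟨(2*(K+1)^2 + 2*(K+1))/ρ + 1, by positivity, ?_⟩
  set C : ℝ := (2*(K+1)^2 + 2*(K+1))/ρ + 1 with hCdef
  intro h hh u v hu hv hCh hu0 hv0
  -- numeric smallness
  have hθ1 : K*h/(2*ρ) ≤ 1/4 := by
    rw [div_le_iff₀ (by positivity)]
    rw [hCdef, div_add' _ _ _ (ne_of_gt hρ), div_mul_eq_mul_div, div_le_one hρ] at hCh
    nlinarith [mul_pos hh hρ, sq_nonneg K, mul_nonneg (mul_nonneg hK0 hK0) hh.le,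
      mul_nonneg hK0 hh.le]
  have hθ2 : K^2*h/(2*ρ) ≤ 1/4 := by
    rw [div_le_iff₀ (by positivity)]
    rw [hCdef, div_add' _ _ _ (ne_of_gt hρ), div_mul_eq_mul_div, div_le_one hρ] at hCh
    nlinarith [mul_pos hh hρ, mul_nonneg (mul_nonneg hK0 hK0) hh.le, mul_nonneg hK0 hh.le]
  -- the transported solutions
  set W : ℝ → ℂ := fun t => u (γ t) with hWdef
  set O : ℝ → ℂ := fun t => v (γ t) with hOdef
  have hWc : ContinuousOn W (Icc 0 1) := fun t ht =>
    ((hu _ (hγΩ t ht)).continuousAt.comp_continuousWithinAt (hγc t ht))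
  have hOc : ContinuousOn O (Icc 0 1) := fun t ht =>
    ((hv _ (hγΩ t ht)).continuousAt.comp_continuousWithinAt (hγc t ht))
  have hW' : ∀ t ∈ Icc (0:ℝ) 1, HasDerivAt W (Ψ t * O t) t := by
    intro t ht
    have := (hu _ (hγΩ t ht)).scomp t (hγ t ht).2
    simpa [hΨdef, hWdef, hOdef, smul_eq_mul, Function.comp_def] using this.congr_deriv (by simp [smul_eq_mul]; ring)
  have hO' : ∀ t ∈ Icc (0:ℝ) 1, HasDerivAt O (Ψ t * W t - (2*Δ/(h:ℂ)) * O t) t := by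
    intro t ht
    have hne := hsqne _ (hγΩ t ht)
    have := (hv _ (hγΩ t ht)).scomp t (hγ t ht).2
    apply this.congr_deriv
    simp only [smul_eq_mul, hΨdef, hWdef, hOdef]
    field_simp
  -- the maximum of ‖W‖
  obtain ⟨tm, htm, hNmax⟩ := (isCompact_Icc (a := (0:ℝ)) (b := 1)).exists_isMaxOn
    (nonempty_Icc.2 zero_le_one) (hWc.norm)
  set N : ℝ := ‖W tm‖ with hNdef
  have hN : ∀ t ∈ Icc (0:ℝ) 1, ‖W t‖ ≤ N := fun t ht => hNmax ht
  have hN0 : 0 ≤ N := norm_nonneg _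
  -- exponential weight
  set cR : ℝ := 2*ρ/h with hcRdef
  have hcR : 0 < cR := by positivity
  set q : ℝ → ℂ := fun s => Complex.exp ((2*Δ/(h:ℂ)) * s) with hqdef
  have hq' : ∀ s : ℝ, HasDerivAt q ((2*Δ/(h:ℂ)) * q s) s := by
    intro s
    have h1 : HasDerivAt (fun w : ℂ => Complex.exp ((2*Δ/(h:ℂ)) * w))
        (Complex.exp ((2*Δ/(h:ℂ)) * s) * (2*Δ/(h:ℂ))) (s : ℂ) := by
      simpa using ((hasDerivAt_id ((s:ℝ) : ℂ)).const_mul (2*Δ/(h:ℂ))).cexp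
    simpa [hqdef, mul_comm] using h1.comp_ofReal
  have hqnorm : ∀ s : ℝ, ‖q s‖ = Real.exp (cR * s) := by
    intro s
    have harg : (2*Δ/(h:ℂ)) * (s:ℂ) = ((2*s/h : ℝ):ℂ) * Δ := by
      push_cast
      field_simp
    rw [hqdef]
    simp only [harg]
    rw [Complex.norm_exp]
    congr 1
    simp [hcRdef]
    field_simp
    ring
  have hq0 : q 0 = 1 := by simp [hqdef]
  have hqne : ∀ s : ℝ, q s ≠ 0 := fun s => Complex.exp_ne_zero _
  -- FTC for Q = q * O
  have hQ' : ∀ t ∈ Icc (0:ℝ) 1, HasDerivAt (fun s => q s * O s) (q t * (Ψ t * W t)) t := by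
    intro t ht
    have := (hq' t).mul (hO' t ht)
    apply this.congr_deriv
    ring
  have hsub : ∀ t ∈ Icc (0:ℝ) 1, uIcc (0:ℝ) t ⊆ Icc (0:ℝ) 1 := by
    intro t ht
    rw [uIcc_of_le ht.1]
    exact Icc_subset_Icc le_rfl ht.2
  have hFTCQ : ∀ t ∈ Icc (0:ℝ) 1,
      q t * O t = O 0 + ∫ s in (0:ℝ)..t, q s * (Ψ s * W s) := by
    intro t ht
    have hint : IntervalIntegrable (fun s => q s * (Ψ s * W s)) MeasureTheory.volume 0 t := by
      apply ContinuousOn.intervalIntegrable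
      apply ContinuousOn.mul
      · exact ((Complex.continuous_exp.comp (continuous_const.mul
          Complex.continuous_ofReal)).continuousOn)
      · exact ((hΨc.mono (hsub t ht)).mul (hWc.mono (hsub t ht)))
    have := intervalIntegral.integral_eq_sub_of_hasDerivAt
      (fun s hs => hQ' s (hsub t ht hs)) hint
    rw [this, hq0]
    ring
  -- pointwise bound on O
  have hintq : ∀ t ∈ Icc (0:ℝ) 1,
      ‖∫ s in (0:ℝ)..t, q s * (Ψ s * W s)‖ ≤ K * N * (Real.exp (cR*t) - 1)/cR := by
    intro t ht
    calc ‖∫ s in (0:ℝ)..t, q s * (Ψ s * W s)‖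
        ≤ ∫ s in (0:ℝ)..t, ‖q s * (Ψ s * W s)‖ :=
          intervalIntegral.norm_integral_le_integral_norm ht.1
      _ ≤ ∫ s in (0:ℝ)..t, Real.exp (cR*s) * (K*N) := by
          apply intervalIntegral.integral_mono_on ht.1
          · apply ContinuousOn.intervalIntegrable
            apply ContinuousOn.norm
            apply ContinuousOn.mul
            · exact ((Complex.continuous_exp.comp (continuous_const.mul
                Complex.continuous_ofReal)).continuousOn)
            · exact ((hΨc.mono (hsub t ht)).mul (hWc.mono (hsub t ht)))
          · apply ContinuousOn.intervalIntegrable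
            exact (Real.continuous_exp.comp (continuous_const.mul continuous_id)).continuousOn.mul
              continuousOn_const
          · intro s hs
            have hs1 : s ∈ Icc (0:ℝ) 1 := Icc_subset_Icc le_rfl ht.2 hs
            rw [norm_mul, norm_mul, hqnorm]
            have := mul_le_mul (hK s hs1) (hN s hs1) (norm_nonneg _) hK0
            calc Real.exp (cR*s) * (‖Ψ s‖ * ‖W s‖) ≤ Real.exp (cR*s) * (K * N) := by
                  apply mul_le_mul_of_nonneg_left this (Real.exp_nonneg _)
              _ = Real.exp (cR*s) * (K*N) := rfl
      _ = K * N * (Real.exp (cR*t) - 1)/cR := by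
          rw [intervalIntegral.integral_mul_const, integral_exp_mul (ne_of_gt hcR)]
          field_simp
  have hObound : ∀ t ∈ Icc (0:ℝ) 1,
      ‖O t‖ ≤ Real.exp (-(cR*t)) * ‖O 0‖ + K*N*(h/(2*ρ)) := by
    intro t ht
    have hOt : O t = (q t)⁻¹ * (O 0 + ∫ s in (0:ℝ)..t, q s * (Ψ s * W s)) := by
      rw [← hFTCQ t ht]
      field_simp [hqne t]
    rw [hOt, norm_mul, norm_inv, hqnorm]
    rw [← Real.exp_neg]
    have hexp0 : (0:ℝ) < Real.exp (-(cR*t)) := Real.exp_pos _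
    calc Real.exp (-(cR*t)) * ‖O 0 + ∫ s in (0:ℝ)..t, q s * (Ψ s * W s)‖
        ≤ Real.exp (-(cR*t)) * (‖O 0‖ + K * N * (Real.exp (cR*t) - 1)/cR) := by
          apply mul_le_mul_of_nonneg_left _ hexp0.le
          exact le_trans (norm_add_le _ _) (by linarith [hintq t ht])
      _ ≤ Real.exp (-(cR*t)) * ‖O 0‖ + K*N*(h/(2*ρ)) := by
          rw [mul_add]
          refine add_le_add le_rfl ?_
          have e1 : Real.exp (-(cR*t)) * (Real.exp (cR*t) - 1) ≤ 1 := by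
            rw [mul_sub, ← Real.exp_add]
            simp only [neg_add_cancel, Real.exp_zero]
            have := Real.exp_pos (-(cR*t))
            linarith
          have hDcR : (cR:ℝ)⁻¹ = h/(2*ρ) := by
            rw [hcRdef]
            field_simp
          calc Real.exp (-(cR*t)) * (K*N*(Real.exp (cR*t) - 1)/cR)
              = (K*N/cR) * (Real.exp (-(cR*t)) * (Real.exp (cR*t) - 1)) := by ring
            _ ≤ (K*N/cR) * 1 := by
                apply mul_le_mul_of_nonneg_left e1 (by positivity)
            _ = K*N*(h/(2*ρ)) := by rw [mul_one, div_eq_mul_inv, hDcR]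
  -- integral bound for ‖O‖
  have hintO : ∀ t ∈ Icc (0:ℝ) 1,
      (∫ s in (0:ℝ)..t, ‖O s‖) ≤ ‖O 0‖*(h/(2*ρ)) + K*N*(h/(2*ρ)) := by
    intro t ht
    have hcont1 : ContinuousOn (fun s => ‖O s‖) (uIcc (0:ℝ) t) := (hOc.mono (hsub t ht)).norm
    have hcont2 : Continuous (fun s : ℝ => Real.exp (-(cR*s)) * ‖O 0‖ + K*N*(h/(2*ρ))) :=
      ((Real.continuous_exp.comp (continuous_const.mul continuous_id).neg).mul
        continuous_const).add continuous_const
    calc (∫ s in (0:ℝ)..t, ‖O s‖)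
        ≤ ∫ s in (0:ℝ)..t, (Real.exp (-(cR*s)) * ‖O 0‖ + K*N*(h/(2*ρ))) := by
          apply intervalIntegral.integral_mono_on ht.1
          · exact hcont1.intervalIntegrable
          · exact hcont2.continuousOn.intervalIntegrable
          · exact fun s hs => hObound s (Icc_subset_Icc le_rfl ht.2 hs)
      _ = ‖O 0‖ * ((Real.exp (-cR*t) - 1)/(-cR)) + K*N*(h/(2*ρ))*t := by
          rw [intervalIntegral.integral_add]
          · rw [intervalIntegral.integral_mul_const, intervalIntegral.integral_const]
            have : (∫ s in (0:ℝ)..t, Real.exp (-(cR*s)))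
                = (Real.exp (-cR*t) - 1)/(-cR) := by
              rw [← integral_exp_mul (c := -cR) (by linarith) t]
              congr 1
              ext s
              ring_nf
            rw [this]
            simp only [smul_eq_mul]
            ring
          · exact ((Real.continuous_exp.comp (continuous_const.mul continuous_id).neg
              ).mul continuous_const).continuousOn.intervalIntegrable
          · exact continuous_const.continuousOn.intervalIntegrable
      _ ≤ ‖O 0‖*(h/(2*ρ)) + K*N*(h/(2*ρ)) := by
          have e2 : (Real.exp (-cR*t) - 1)/(-cR) ≤ h/(2*ρ) := by
            rw [div_le_iff_of_neg (by linarith : -cR < 0)]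
            have : Real.exp (-cR*t) > 0 := Real.exp_pos _
            have e3 : h/(2*ρ) * -cR = -1 := by
              rw [hcRdef]; field_simp
            rw [e3]; linarith
          have e4 : K*N*(h/(2*ρ))*t ≤ K*N*(h/(2*ρ)) := by
            have : K*N*(h/(2*ρ)) ≥ 0 := by positivity
            nlinarith [ht.2, this]
          have e5 : ‖O 0‖ * ((Real.exp (-cR*t) - 1)/(-cR)) ≤ ‖O 0‖*(h/(2*ρ)) :=
            mul_le_mul_of_nonneg_left e2 (norm_nonneg _)
          linarith
  -- FTC for W
  have hFTCW : ∀ t ∈ Icc (0:ℝ) 1, W t - W 0 = ∫ s in (0:ℝ)..t, Ψ s * O s := by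
    intro t ht
    rw [intervalIntegral.integral_eq_sub_of_hasDerivAt (fun s hs => hW' s (hsub t ht hs))
      (((hΨc.mono (hsub t ht)).mul (hOc.mono (hsub t ht))).intervalIntegrable)]
  have hWbound : ∀ t ∈ Icc (0:ℝ) 1,
      ‖W t - W 0‖ ≤ K * (‖O 0‖*(h/(2*ρ)) + K*N*(h/(2*ρ))) := by
    intro t ht
    rw [hFTCW t ht]
    calc ‖∫ s in (0:ℝ)..t, Ψ s * O s‖
        ≤ ∫ s in (0:ℝ)..t, ‖Ψ s * O s‖ :=
          intervalIntegral.norm_integral_le_integral_norm ht.1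
      _ ≤ ∫ s in (0:ℝ)..t, K * ‖O s‖ := by
          apply intervalIntegral.integral_mono_on ht.1
          · exact ((hΨc.mono (hsub t ht)).mul (hOc.mono (hsub t ht))).norm.intervalIntegrable
          · exact (continuousOn_const.mul (hOc.mono (hsub t ht)).norm).intervalIntegrable
          · intro s hs
            rw [norm_mul]
            exact mul_le_mul_of_nonneg_right (hK s (Icc_subset_Icc le_rfl ht.2 hs))
              (norm_nonneg _)
      _ = K * ∫ s in (0:ℝ)..t, ‖O s‖ := intervalIntegral.integral_const_mul _ _
      _ ≤ K * (‖O 0‖*(h/(2*ρ)) + K*N*(h/(2*ρ))) :=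
          mul_le_mul_of_nonneg_left (hintO t ht) hK0
  -- endpoint identifications
  have hO0v : O 0 = v z := by rw [hOdef]; simp [hγ0]
  have hW0u : W 0 = u z := by rw [hWdef]; simp [hγ0]
  have hO1v : O 1 = v w := by rw [hOdef]; simp [hγ1]
  have hW1u : W 1 = u w := by rw [hWdef]; simp [hγ1]
  have hO0 : ‖O 0‖ ≤ 1 := by rw [hO0v]; exact hv0
  have hW0 : ‖W 0‖ ≤ 2 := by rw [hW0u]; exact hu0
  have hD0 : (0:ℝ) ≤ h/(2*ρ) := by positivity
  -- N ≤ 3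
  have hNle : N ≤ 3 := by
    have h1 := hWbound tm htm
    have h2 : N ≤ ‖W tm - W 0‖ + ‖W 0‖ := by
      rw [hNdef]
      simpa using norm_add_le (W tm - W 0) (W 0)
    have e1 : K*(‖O 0‖*(h/(2*ρ))) ≤ 1/4 := by
      have : K*(‖O 0‖*(h/(2*ρ))) ≤ K*(1*(h/(2*ρ))) := by
        apply mul_le_mul_of_nonneg_left _ hK0
        exact mul_le_mul_of_nonneg_right hO0 hD0
      calc K*(‖O 0‖*(h/(2*ρ))) ≤ K*(1*(h/(2*ρ))) := this
        _ = K*h/(2*ρ) := by ring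
        _ ≤ 1/4 := hθ1
    have e2 : K*(K*N*(h/(2*ρ))) ≤ N/4 := by
      calc K*(K*N*(h/(2*ρ))) = (K^2*h/(2*ρ))*N := by ring
        _ ≤ (1/4)*N := mul_le_mul_of_nonneg_right hθ2 hN0
        _ = N/4 := by ring
    have h3 : K * (‖O 0‖*(h/(2*ρ)) + K*N*(h/(2*ρ)))
        = K*(‖O 0‖*(h/(2*ρ))) + K*(K*N*(h/(2*ρ))) := by ring
    rw [h3] at h1
    linarith
  -- final estimates
  have hMle : (K + 3*K^2)/(2*ρ) ≤ C ∧ 3*K/(2*ρ) ≤ C := by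
    have hbase : (2*(K+1)^2 + 2*(K+1))/ρ ≤ C := by rw [hCdef]; linarith
    have h2ρ : (0:ℝ) < 2*ρ := by linarith
    constructor
    · have : (K + 3*K^2)/(2*ρ) ≤ (2*(K+1)^2 + 2*(K+1))/ρ := by
        rw [div_le_div_iff₀ h2ρ hρ]
        have hpoly : K + 3*K^2 ≤ 2*(2*(K+1)^2 + 2*(K+1)) := by nlinarith [sq_nonneg K]
        nlinarith [mul_le_mul_of_nonneg_right hpoly hρ.le]
      linarith
    · have : 3*K/(2*ρ) ≤ (2*(K+1)^2 + 2*(K+1))/ρ := by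
        rw [div_le_div_iff₀ h2ρ hρ]
        have hpoly : 3*K ≤ 2*(2*(K+1)^2 + 2*(K+1)) := by nlinarith [sq_nonneg K]
        nlinarith [mul_le_mul_of_nonneg_right hpoly hρ.le]
      linarith
  constructor
  · have h1 := hWbound 1 (by constructor <;> norm_num)
    rw [hW1u, hW0u] at h1
    have h2 : K * (‖O 0‖*(h/(2*ρ)) + K*N*(h/(2*ρ))) ≤ (K + 3*K^2) * (h/(2*ρ)) := by
      have e1 : K*(‖O 0‖*(h/(2*ρ))) ≤ K*(h/(2*ρ)) := by
        have := mul_le_mul_of_nonneg_right hO0 hD0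
        have := mul_le_mul_of_nonneg_left this hK0
        calc K*(‖O 0‖*(h/(2*ρ))) ≤ K*(1*(h/(2*ρ))) := this
          _ = K*(h/(2*ρ)) := by ring
      have e2 : K*(K*N*(h/(2*ρ))) ≤ 3*K^2*(h/(2*ρ)) := by
        have h3 : K*N*(h/(2*ρ)) ≤ K*3*(h/(2*ρ)) := by
          apply mul_le_mul_of_nonneg_right _ hD0
          exact mul_le_mul_of_nonneg_left hNle hK0
        calc K*(K*N*(h/(2*ρ))) ≤ K*(K*3*(h/(2*ρ))) :=
              mul_le_mul_of_nonneg_left h3 hK0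
          _ = 3*K^2*(h/(2*ρ)) := by ring
      calc K * (‖O 0‖*(h/(2*ρ)) + K*N*(h/(2*ρ)))
          = K*(‖O 0‖*(h/(2*ρ))) + K*(K*N*(h/(2*ρ))) := by ring
        _ ≤ K*(h/(2*ρ)) + 3*K^2*(h/(2*ρ)) := add_le_add e1 e2
        _ = (K + 3*K^2) * (h/(2*ρ)) := by ring
    calc ‖u w - u z‖ ≤ K * (‖O 0‖*(h/(2*ρ)) + K*N*(h/(2*ρ))) := h1
      _ ≤ (K + 3*K^2) * (h/(2*ρ)) := h2
      _ = ((K + 3*K^2)/(2*ρ)) * h := by ring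
      _ ≤ C * h := mul_le_mul_of_nonneg_right hMle.1 hh.le
  · have h1 := hObound 1 (by constructor <;> norm_num)
    rw [hO1v, hO0v] at h1
    have e1 : Real.exp (-(cR*1)) ≤ 1 := by
      rw [Real.exp_le_one_iff]
      nlinarith [hcR]
    calc ‖v w‖ ≤ Real.exp (-(cR*1)) * ‖v z‖ + K*N*(h/(2*ρ)) := h1
      _ ≤ ‖v z‖ + 3*K*(h/(2*ρ)) := by
          have e2 : Real.exp (-(cR*1)) * ‖v z‖ ≤ ‖v z‖ := by
            have e3 : Real.exp (-(cR*1)) * ‖v z‖ ≤ 1 * ‖v z‖ :=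
              mul_le_mul_of_nonneg_right e1 (norm_nonneg _)
            linarith
          have e4 : K*N*(h/(2*ρ)) ≤ 3*K*(h/(2*ρ)) := by
            apply mul_le_mul_of_nonneg_right _ hD0
            calc K*N ≤ K*3 := mul_le_mul_of_nonneg_left hNle hK0
              _ = 3*K := by ring
          linarith
      _ = ‖v z‖ + (3*K/(2*ρ))*h := by ring
      _ ≤ ‖v z‖ + C * h := by
          have := mul_le_mul_of_nonneg_right hMle.2 hh.le
          linarith


lemma zchain_estimate {Ω Zb : Set ℂ} {sq φ : ℂ → ℂ}
    (hsqne : ∀ x ∈ Ω, sq x ≠ 0) (hsqc : ContinuousOn sq Ω)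
    (hφc : ContinuousOn φ (Ω \ Zb))
    {a b : ℂ} (hab : Relation.ReflTransGen (ZStep Ω Zb sq) a b)
    (h₀ : ℝ) (hh₀ : 0 < h₀) (we wo : ℝ → ℂ → ℂ)
    (hbase : ∀ h ∈ Ioc (0:ℝ) h₀, we h a = 1 ∧ wo h a = 0)
    (hode : ∀ h ∈ Ioc (0:ℝ) h₀, (∀ x ∈ Ω, HasDerivAt (we h) (φ x * wo h x) x) ∧
            (∀ x ∈ Ω, HasDerivAt (wo h) (φ x * we h x - 2 * sq x / (h:ℂ) * wo h x) x)) :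
    ∃ C : ℝ, 0 < C ∧ ∃ h₁, h₁ ∈ Ioc (0:ℝ) h₀ ∧ ∀ h ∈ Ioc (0:ℝ) h₁,
      ‖we h b - 1‖ ≤ C * h ∧ ‖wo h b‖ ≤ C * h := by
  induction hab with
  | refl =>
    refine ⟨1, one_pos, h₀, ⟨hh₀, le_rfl⟩, fun h hh => ?_⟩
    rw [(hbase h hh).1, (hbase h hh).2]
    simp only [sub_self, norm_zero]
    constructor <;> nlinarith [hh.1]
  | @tail z c hzchain hstep ih =>
    obtain ⟨C, hC, h₁, hh₁, hbnd⟩ := ih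
    obtain ⟨C', hC', hstep_est⟩ := zstep_estimate hsqne hsqc hφc hstep
    have hmin : (0:ℝ) < min h₁ (min (1/C') (1/C)) := lt_min hh₁.1 (lt_min (by positivity) (by positivity))
    refine ⟨C + C', by positivity, min h₁ (min (1/C') (1/C)),
      ⟨hmin, le_trans (min_le_left _ _) hh₁.2⟩, ?_⟩
    intro h hh
    have hhI : h ∈ Ioc (0:ℝ) h₁ := ⟨hh.1, le_trans hh.2 (min_le_left _ _)⟩
    have hhh₀ : h ∈ Ioc (0:ℝ) h₀ := ⟨hh.1, le_trans hhI.2 hh₁.2⟩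
    have hC'h : C' * h ≤ 1 := by
      have : h ≤ 1/C' := le_trans hh.2 (le_trans (min_le_right _ _) (min_le_left _ _))
      rw [le_div_iff₀ hC'] at this
      linarith
    have hCh : C * h ≤ 1 := by
      have : h ≤ 1/C := le_trans hh.2 (le_trans (min_le_right _ _) (min_le_right _ _))
      rw [le_div_iff₀ hC] at this
      linarith
    obtain ⟨hb1, hb2⟩ := hbnd h hhI
    have hu0 : ‖we h z‖ ≤ 2 := by
      calc ‖we h z‖ = ‖(we h z - 1) + 1‖ := by ring_nf
        _ ≤ ‖we h z - 1‖ + ‖(1:ℂ)‖ := norm_add_le _ _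
        _ ≤ C * h + 1 := by rw [norm_one]; linarith
        _ ≤ 2 := by linarith
    have hv0 : ‖wo h z‖ ≤ 1 := le_trans hb2 hCh
    obtain ⟨he1, he2⟩ := hstep_est h hh.1 (we h) (wo h) (hode h hhh₀).1 (hode h hhh₀).2
      hC'h hu0 hv0
    constructor
    · calc ‖we h c - 1‖ = ‖(we h c - we h z) + (we h z - 1)‖ := by ring_nf
        _ ≤ ‖we h c - we h z‖ + ‖we h z - 1‖ := norm_add_le _ _
        _ ≤ C' * h + C * h := add_le_add he1 hb1
        _ = (C + C') * h := by ring
    · calc ‖wo h c‖ ≤ ‖wo h z‖ + C' * h := he2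
        _ ≤ C * h + C' * h := by linarith
        _ = (C + C') * h := by ring


lemma zchart {Ω : Set ℂ} (hΩ : IsOpen Ω) {sq Zα : ℂ → ℂ}
    (hZα : ∀ x ∈ Ω, HasDerivAt Zα (sq x) x) (hsqne : ∀ x ∈ Ω, sq x ≠ 0)
    {z₀ : ℂ} (hz₀ : z₀ ∈ Ω) :
    ∃ (r₁ r₂ ρ : ℝ) (g : ℂ → ℂ), 0 < r₁ ∧ 0 < r₂ ∧ 0 < ρ ∧ r₂ ≤ r₁ ∧
      closedBall z₀ r₁ ⊆ Ω ∧
      (∀ ζ ∈ ball (Zα z₀) ρ, g ζ ∈ ball z₀ r₁ ∧ Zα (g ζ) = ζ ∧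
        HasDerivAt g (sq (g ζ))⁻¹ ζ) ∧
      (∀ z ∈ ball z₀ r₂, Zα z ∈ ball (Zα z₀) (ρ/4) ∧ g (Zα z) = z) := by
  have hdiff : DifferentiableOn ℂ Zα Ω := fun x hx => ((hZα x hx).differentiableAt).differentiableWithinAt
  have hana : AnalyticOnNhd ℂ Zα Ω := hdiff.analyticOnNhd hΩ
  obtain ⟨p, hp⟩ := hana z₀ hz₀
  have hstrict0 := hp.hasStrictDerivAt
  have hval : (p 1 fun _ => 1) = sq z₀ := hstrict0.hasDerivAt.unique (hZα z₀ hz₀)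
  rw [hval] at hstrict0
  have hne0 : sq z₀ ≠ 0 := hsqne z₀ hz₀
  have hF : HasStrictFDerivAt Zα
      (ContinuousLinearEquiv.unitsEquivAut ℂ (Units.mk0 (sq z₀) hne0) : ℂ →L[ℂ] ℂ) z₀ :=
    hstrict0.hasStrictFDerivAt_equiv hne0
  set e := hF.toOpenPartialHomeomorph Zα with hedef
  have hecoe : (e : ℂ → ℂ) = Zα := rfl
  have hz₀src : z₀ ∈ e.source := hF.mem_toOpenPartialHomeomorph_source
  -- r₁
  obtain ⟨ε, hε, hball⟩ := Metric.isOpen_iff.1 (hΩ.inter e.open_source) z₀ ⟨hz₀, hz₀src⟩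
  set r₁ := ε/2 with hr₁def
  have hr₁ : 0 < r₁ := by positivity
  have hcb : closedBall z₀ r₁ ⊆ Ω ∩ e.source :=
    le_trans (closedBall_subset_ball (by linarith)) hball
  -- target ball
  have hTopen : IsOpen (e.target ∩ e.symm ⁻¹' (ball z₀ r₁)) :=
    e.symm.isOpen_inter_preimage isOpen_ball
  have hζ₀mem : Zα z₀ ∈ e.target ∩ e.symm ⁻¹' (ball z₀ r₁) := by
    constructor
    · rw [← hecoe]; exact e.map_source hz₀src
    · have : e.symm (Zα z₀) = z₀ := by rw [← hecoe]; exact e.left_inv hz₀src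
      simp [this, mem_ball_self hr₁]
  obtain ⟨ρ, hρ, hρball⟩ := Metric.isOpen_iff.1 hTopen _ hζ₀mem
  -- r₂
  have hcont : ContinuousAt Zα z₀ := (hZα z₀ hz₀).continuousAt
  obtain ⟨δ, hδ, hδball⟩ := Metric.continuousAt_iff.1 hcont (ρ/4) (by positivity)
  set r₂ := min (δ/2) r₁ with hr₂def
  have hr₂ : 0 < r₂ := lt_min (by positivity) hr₁
  refine ⟨r₁, r₂, ρ, e.symm, hr₁, hr₂, hρ, min_le_right _ _,
    (le_trans hcb (inter_subset_left)), ?_, ?_⟩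
  · intro ζ hζ
    have hζT := hρball hζ
    have hζtar : ζ ∈ e.target := hζT.1
    have hgb : e.symm ζ ∈ ball z₀ r₁ := hζT.2
    have hgΩ : e.symm ζ ∈ Ω := (hcb (ball_subset_closedBall hgb)).1
    have hright : Zα (e.symm ζ) = ζ := by rw [← hecoe]; exact e.right_inv hζtar
    refine ⟨hgb, hright, ?_⟩
    apply HasDerivAt.of_local_left_inverse (e.continuousAt_symm hζtar)
      (hZα _ hgΩ) (hsqne _ hgΩ)
    filter_upwards [e.open_target.mem_nhds hζtar] with y hy
    rw [← hecoe]; exact e.right_inv hy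
  · intro z hz
    have hz1 : z ∈ ball z₀ r₁ := ball_subset_ball (min_le_right _ _) hz
    have hzsrc : z ∈ e.source := (hcb (ball_subset_closedBall hz1)).2
    constructor
    · apply hδball
      calc dist z z₀ < r₂ := hz
        _ ≤ δ/2 := min_le_left _ _
        _ < δ := by linarith
    · rw [← hecoe]; exact e.left_inv hzsrc

lemma zfinite {Ω Zb : Set ℂ}
    (hZloc : ∀ z ∈ Ω, ∃ ε > 0, ball z ε ⊆ Ω ∧ Zb ∩ ball z ε ⊆ {z})
    {K : Set ℂ} (hK : IsCompact K) (hKΩ : K ⊆ Ω) : (Zb ∩ K).Finite := by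
  have hU : ∀ x ∈ K, ∃ ε > 0, Zb ∩ ball x ε ⊆ {x} := by
    intro x hx
    obtain ⟨ε, hε, _, h2⟩ := hZloc x (hKΩ hx)
    exact ⟨ε, hε, h2⟩
  choose! ε hε hsub using hU
  obtain ⟨t, hcov⟩ := hK.elim_nhds_subcover' (fun x hx => ball x (ε x))
    (fun x hx => ball_mem_nhds _ (hε x hx))
  apply Set.Finite.subset (Set.Finite.image (fun x : ↥K => (x : ℂ)) t.finite_toSet)
  intro y hy
  obtain ⟨x, hxt, hyx⟩ := Set.mem_iUnion₂.1 (hcov hy.2)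
  have hmem : y ∈ Zb ∩ ball (x:ℂ) (ε (x:ℂ)) := ⟨hy.1, hyx⟩
  have heq := hsub (x:ℂ) x.2 hmem
  simp only [mem_singleton_iff] at heq
  subst heq
  exact Set.mem_image_of_mem _ hxt


/-- point on a segment -/
def pnt (p q : ℂ) (t : ℝ) : ℂ := p + (t:ℂ)*(q - p)

lemma pnt_zero (p q : ℂ) : pnt p q 0 = p := by simp [pnt]
lemma pnt_one (p q : ℂ) : pnt p q 1 = q := by simp [pnt]
lemma pnt_re (p q : ℂ) (t : ℝ) : (pnt p q t).re = p.re + t*(q.re - p.re) := by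
  simp [pnt, Complex.add_re, Complex.mul_re]
lemma pnt_im (p q : ℂ) (t : ℝ) : (pnt p q t).im = p.im + t*(q.im - p.im) := by
  simp [pnt, Complex.add_im, Complex.mul_im]
lemma pnt_hasDeriv (p q : ℂ) (t : ℝ) : HasDerivAt (pnt p q) (q - p) t := by
  have h1 : HasDerivAt (fun t : ℝ => (t:ℂ)) 1 t := by
    simpa using (hasDerivAt_id t).ofReal_comp
  have := (h1.mul_const (q - p)).const_add p
  rw [one_mul] at this
  exact this

lemma seg_mem_ball {c p q : ℂ} {r rp rq : ℝ} (hp : dist p c < rp) (hq : dist q c < rq)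
    (hrp : rp < r) (hrq : rq < r) {t : ℝ} (ht : t ∈ Icc (0:ℝ) 1) :
    dist (pnt p q t) c < r := by
  have key : pnt p q t - c = ((1 - t : ℝ):ℂ)*(p - c) + ((t:ℝ):ℂ)*(q - c) := by
    simp only [pnt]
    push_cast
    ring
  rw [dist_eq_norm, key]
  have h1 : ‖((1 - t : ℝ):ℂ)*(p - c)‖ = (1-t)*‖p - c‖ := by
    rw [norm_mul, Complex.norm_real, Real.norm_eq_abs,
      _root_.abs_of_nonneg (by linarith [ht.2] : (0:ℝ) ≤ 1 - t)]
  have h2 : ‖((t:ℝ):ℂ)*(q - c)‖ = t*‖q - c‖ := by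
    rw [norm_mul, Complex.norm_real, Real.norm_eq_abs, _root_.abs_of_nonneg ht.1]
  rw [dist_eq_norm] at hp hq
  calc ‖((1 - t : ℝ):ℂ)*(p - c) + ((t:ℝ):ℂ)*(q - c)‖
      ≤ ‖((1 - t : ℝ):ℂ)*(p - c)‖ + ‖((t:ℝ):ℂ)*(q - c)‖ := norm_add_le _ _
    _ = (1-t)*‖p - c‖ + t*‖q - c‖ := by rw [h1, h2]
    _ < r := by
        have e1 : (1-t)*‖p-c‖ ≤ (1-t)*rp := mul_le_mul_of_nonneg_left hp.le (by linarith [ht.2])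
        have e2 : t*‖q-c‖ ≤ t*rq := mul_le_mul_of_nonneg_left hq.le ht.1
        have e3 : (1-t)*rp ≤ (1-t)*(max rp rq) :=
          mul_le_mul_of_nonneg_left (le_max_left _ _) (by linarith [ht.2])
        have e4 : t*rq ≤ t*(max rp rq) := mul_le_mul_of_nonneg_left (le_max_right _ _) ht.1
        have e5 : (1-t)*(max rp rq) + t*(max rp rq) = max rp rq := by ring
        have e6 : max rp rq < r := max_lt hrp hrq
        linarith

lemma zconnect {Ω Zb : Set ℂ} {sq Zα : ℂ → ℂ}
    {z₀ : ℂ} {r₁ r₂ ρ : ℝ} {g : ℂ → ℂ}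
    (hr₁ : 0 < r₁) (hρ : 0 < ρ)
    (hcb : closedBall z₀ r₁ ⊆ Ω)
    (hg : ∀ ζ ∈ ball (Zα z₀) ρ, g ζ ∈ ball z₀ r₁ ∧ Zα (g ζ) = ζ ∧
      HasDerivAt g (sq (g ζ))⁻¹ ζ)
    (hcons : ∀ z ∈ ball z₀ r₂, Zα z ∈ ball (Zα z₀) (ρ/4) ∧ g (Zα z) = z)
    (hfin : (Zb ∩ closedBall z₀ r₁).Finite)
    {z w : ℂ} (hz : z ∈ ball z₀ r₂) (hw : w ∈ ball z₀ r₂)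
    (hzZ : z ∉ Zb) (hwZ : w ∉ Zb)
    (hre : (Zα z).re < (Zα w).re) :
    Relation.ReflTransGen (ZStep Ω Zb sq) z w := by
  set ζ₀ := Zα z₀ with hζ₀def
  set ζz := Zα z with hζzdef
  set ζw := Zα w with hζwdef
  have hζz : ζz ∈ ball ζ₀ (ρ/4) := (hcons z hz).1
  have hζw : ζw ∈ ball ζ₀ (ρ/4) := (hcons w hw).1
  have hgz : g ζz = z := (hcons z hz).2
  have hgw : g ζw = w := (hcons w hw).2
  set m : ℝ := (ζz.re + ζw.re)/2 with hmdef
  have hm1 : ζz.re < m := by rw [hmdef]; linarith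
  have hm2 : m < ζw.re := by rw [hmdef]; linarith
  -- the bad set in the chart
  set B : Set ℂ := {ζ | ζ ∈ ball ζ₀ ρ ∧ g ζ ∈ Zb} with hBdef
  have hBfin : B.Finite := by
    have himg : (g '' B) ⊆ Zb ∩ closedBall z₀ r₁ := by
      rintro x ⟨ζ, hζ, rfl⟩
      exact ⟨hζ.2, ball_subset_closedBall (hg ζ hζ.1).1⟩
    have hinj : InjOn g B := by
      intro a ha b hb hab
      have h1 := (hg a ha.1).2.1
      have h2 := (hg b hb.1).2.1
      rw [← h1, ← h2, hab]
    exact Set.Finite.of_finite_image (hfin.subset himg) hinj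
  -- choose the intermediate imaginary part
  set ζstar : ℝ → ℂ := fun y => (m:ℂ) + (y:ℂ)*Complex.I with hζstardef
  have hζstar_re : ∀ y, (ζstar y).re = m := by intro y; simp [hζstardef]
  have hζstar_im : ∀ y, (ζstar y).im = y := by intro y; simp [hζstardef]
  set Y1 : Set ℝ := {y | ∃ t ∈ Icc (0:ℝ) 1, pnt ζz (ζstar y) t ∈ B ∧ pnt ζz (ζstar y) t ≠ ζz}
    with hY1def
  set Y2 : Set ℝ := {y | ∃ t ∈ Icc (0:ℝ) 1, pnt (ζstar y) ζw t ∈ B ∧ pnt (ζstar y) ζw t ≠ ζw}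
    with hY2def
  have hY1fin : Y1.Finite := by
    have hsub : Y1 ⊆ ⋃ b ∈ B, {y | ∃ t ∈ Icc (0:ℝ) 1, pnt ζz (ζstar y) t = b ∧ b ≠ ζz} := by
      rintro y ⟨t, ht, hB, hne⟩
      exact Set.mem_biUnion hB ⟨t, ht, rfl, hne⟩
    apply Set.Finite.subset _ hsub
    apply hBfin.biUnion
    intro b _
    apply Set.Subsingleton.finite
    rintro y ⟨t, ht, heq, hbne⟩ y' ⟨t', ht', heq', _⟩
    have hre1 : ζz.re + t*(m - ζz.re) = b.re := by
      have := congrArg Complex.re heq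
      rwa [pnt_re, hζstar_re] at this
    have hre2 : ζz.re + t'*(m - ζz.re) = b.re := by
      have := congrArg Complex.re heq'
      rwa [pnt_re, hζstar_re] at this
    have htt : t = t' := by
      have hne : m - ζz.re ≠ 0 := ne_of_gt (by linarith)
      have heq2 : t*(m - ζz.re) = t'*(m - ζz.re) := by linarith
      exact mul_right_cancel₀ hne heq2
    have ht0 : t ≠ 0 := by
      intro h0
      rw [h0, pnt_zero] at heq
      exact hbne heq.symm
    have him1 : ζz.im + t*(y - ζz.im) = b.im := by
      have := congrArg Complex.im heq
      rwa [pnt_im, hζstar_im] at this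
    have him2 : ζz.im + t*(y' - ζz.im) = b.im := by
      have := congrArg Complex.im heq'
      rw [pnt_im, hζstar_im] at this
      rwa [← htt] at this
    have : t*(y - ζz.im) = t*(y' - ζz.im) := by linarith
    have := mul_left_cancel₀ ht0 this
    linarith
  have hY2fin : Y2.Finite := by
    have hsub : Y2 ⊆ ⋃ b ∈ B, {y | ∃ t ∈ Icc (0:ℝ) 1, pnt (ζstar y) ζw t = b ∧ b ≠ ζw} := by
      rintro y ⟨t, ht, hB, hne⟩
      exact Set.mem_biUnion hB ⟨t, ht, rfl, hne⟩
    apply Set.Finite.subset _ hsub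
    apply hBfin.biUnion
    intro b _
    apply Set.Subsingleton.finite
    rintro y ⟨t, ht, heq, hbne⟩ y' ⟨t', ht', heq', _⟩
    have hre1 : m + t*(ζw.re - m) = b.re := by
      have := congrArg Complex.re heq
      rwa [pnt_re, hζstar_re] at this
    have hre2 : m + t'*(ζw.re - m) = b.re := by
      have := congrArg Complex.re heq'
      rwa [pnt_re, hζstar_re] at this
    have htt : t = t' := by
      have hne : ζw.re - m ≠ 0 := by linarith
      have : t*(ζw.re - m) = t'*(ζw.re - m) := by linarith
      exact mul_right_cancel₀ hne this
    have ht1 : t ≠ 1 := by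
      intro h1
      rw [h1, pnt_one] at heq
      exact hbne heq.symm
    have him1 : y + t*(ζw.im - y) = b.im := by
      have := congrArg Complex.im heq
      rwa [pnt_im, hζstar_im] at this
    have him2 : y' + t*(ζw.im - y') = b.im := by
      have := congrArg Complex.im heq'
      rw [pnt_im, hζstar_im] at this
      rwa [← htt] at this
    have hfac : (1 - t)*y = (1 - t)*y' := by linarith
    have h1t : (1:ℝ) - t ≠ 0 := by
      intro h
      exact ht1 (by linarith)
    have := mul_left_cancel₀ h1t hfac
    linarith
  -- choose y
  obtain ⟨y, hyI, hyY⟩ : ∃ y ∈ Ioo (ζ₀.im - ρ/2) (ζ₀.im + ρ/2), y ∉ Y1 ∪ Y2 := by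
    have hinf := (Set.Ioo_infinite (by linarith : ζ₀.im - ρ/2 < ζ₀.im + ρ/2))
    obtain ⟨y, hy⟩ := (hinf.diff (hY1fin.union hY2fin)).nonempty
    exact ⟨y, hy.1, hy.2⟩
  have hyY1 : y ∉ Y1 := fun h => hyY (Or.inl h)
  have hyY2 : y ∉ Y2 := fun h => hyY (Or.inr h)
  -- the intermediate chart point
  have hζstar_ball : ζstar y ∈ ball ζ₀ (3*ρ/4) := by
    rw [mem_ball, dist_eq_norm]
    calc ‖ζstar y - ζ₀‖ ≤ |(ζstar y - ζ₀).re| + |(ζstar y - ζ₀).im| :=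
          Complex.norm_le_abs_re_add_abs_im _
      _ < 3*ρ/4 := by
          rw [Complex.sub_re, Complex.sub_im, hζstar_re, hζstar_im]
          have hz4 : |ζz.re - ζ₀.re| < ρ/4 := by
            calc |ζz.re - ζ₀.re| = |(ζz - ζ₀).re| := by rw [Complex.sub_re]
              _ ≤ ‖ζz - ζ₀‖ := Complex.abs_re_le_norm _
              _ < ρ/4 := by rw [← Complex.dist_eq]; exact hζz
          have hw4 : |ζw.re - ζ₀.re| < ρ/4 := by
            calc |ζw.re - ζ₀.re| = |(ζw - ζ₀).re| := by rw [Complex.sub_re]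
              _ ≤ ‖ζw - ζ₀‖ := Complex.abs_re_le_norm _
              _ < ρ/4 := by rw [← Complex.dist_eq]; exact hζw
          have h1 : |m - ζ₀.re| < ρ/4 := by
            rw [hmdef]
            rw [abs_lt] at hz4 hw4 ⊢
            constructor <;> [linarith; linarith]
          have h2 : |y - ζ₀.im| < ρ/2 := by
            rw [abs_lt]
            constructor <;> [linarith [hyI.1]; linarith [hyI.2]]
          linarith
  have hζzb : dist ζz ζ₀ < ρ/4 := hζz
  have hζwb : dist ζw ζ₀ < ρ/4 := hζw
  have hζsb : dist (ζstar y) ζ₀ < 3*ρ/4 := hζstar_ball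
  have hseg1 : ∀ t ∈ Icc (0:ℝ) 1, pnt ζz (ζstar y) t ∈ ball ζ₀ ρ := by
    intro t ht
    exact seg_mem_ball hζzb hζsb (by linarith) (by linarith) ht
  have hseg2 : ∀ t ∈ Icc (0:ℝ) 1, pnt (ζstar y) ζw t ∈ ball ζ₀ ρ := by
    intro t ht
    exact seg_mem_ball hζsb hζwb (by linarith) (by linarith) ht
  have hstarball : ζstar y ∈ ball ζ₀ ρ := ball_subset_ball (by linarith) hζstar_ball
  have hgstarZ : g (ζstar y) ∉ Zb := by
    intro hmem
    have hBmem : ζstar y ∈ B := ⟨hstarball, hmem⟩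
    have hne : ζstar y ≠ ζw := by
      intro h
      apply hwZ
      rw [← hgw, ← h]
      exact hmem
    exact hyY2 ⟨0, ⟨le_rfl, zero_le_one⟩, by rwa [pnt_zero], by rwa [pnt_zero]⟩
  have hstep1 : ZStep Ω Zb sq z (g (ζstar y)) := by
    refine ⟨fun t => g (pnt ζz (ζstar y) t), ζstar y - ζz, ?_, ?_, ?_, ?_⟩
    · rw [Complex.sub_re, hζstar_re]; linarith
    · show g (pnt ζz (ζstar y) 0) = z
      rw [pnt_zero, hgz]
    · show g (pnt ζz (ζstar y) 1) = g (ζstar y)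
      rw [pnt_one]
    · intro t ht
      have hmemζ := hseg1 t ht
      obtain ⟨hgball, hgZα, hgderiv⟩ := hg _ hmemζ
      refine ⟨⟨hcb (ball_subset_closedBall hgball), ?_⟩, ?_⟩
      · intro hZ
        have hBm : pnt ζz (ζstar y) t ∈ B := ⟨hmemζ, hZ⟩
        by_cases hc : pnt ζz (ζstar y) t = ζz
        · apply hzZ
          rw [← hgz, ← hc]
          exact hZ
        · exact hyY1 ⟨t, ht, hBm, hc⟩
      · have hp := pnt_hasDeriv ζz (ζstar y) t
        have := hgderiv.scomp t hp
        simpa [smul_eq_mul, Function.comp_def] using this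
  have hstep2 : ZStep Ω Zb sq (g (ζstar y)) w := by
    refine ⟨fun t => g (pnt (ζstar y) ζw t), ζw - ζstar y, ?_, ?_, ?_, ?_⟩
    · rw [Complex.sub_re, hζstar_re]; linarith
    · show g (pnt (ζstar y) ζw 0) = g (ζstar y)
      rw [pnt_zero]
    · show g (pnt (ζstar y) ζw 1) = w
      rw [pnt_one, hgw]
    · intro t ht
      have hmemζ := hseg2 t ht
      obtain ⟨hgball, hgZα, hgderiv⟩ := hg _ hmemζ
      refine ⟨⟨hcb (ball_subset_closedBall hgball), ?_⟩, ?_⟩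
      · intro hZ
        have hBm : pnt (ζstar y) ζw t ∈ B := ⟨hmemζ, hZ⟩
        by_cases hc : pnt (ζstar y) ζw t = ζw
        · apply hwZ
          rw [← hgw, ← hc]
          exact hZ
        · exact hyY2 ⟨t, ht, hBm, hc⟩
      · have hp := pnt_hasDeriv (ζstar y) ζw t
        have := hgderiv.scomp t hp
        simpa [smul_eq_mul, Function.comp_def] using this
  exact Relation.ReflTransGen.tail (Relation.ReflTransGen.single hstep1) hstep2


lemma zpath {Ω Zb : Set ℂ} {sq Zα : ℂ → ℂ}
    (hΩ : IsOpen Ω) (hZα : ∀ x ∈ Ω, HasDerivAt Zα (sq x) x) (hsqne : ∀ x ∈ Ω, sq x ≠ 0)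
    (hZloc : ∀ z ∈ Ω, ∃ ε > 0, ball z ε ⊆ Ω ∧ Zb ∩ ball z ε ⊆ {z})
    {a b : ℂ} (p : ℝ → ℂ) (hpc : ContinuousOn p (Icc 0 1))
    (hpΩ : ∀ t ∈ Icc (0:ℝ) 1, p t ∈ Ω)
    (hp0 : p 0 = a) (hp1 : p 1 = b)
    (hmono : StrictMonoOn (fun t => (Zα (p t)).re) (Icc 0 1))
    (haZ : a ∉ Zb) (hbZ : b ∉ Zb) :
    Relation.ReflTransGen (ZStep Ω Zb sq) a b := by
  -- injectivity of p, finiteness of bad parameters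
  have hpinj : InjOn p (Icc 0 1) := by
    intro t ht t' ht' heq
    by_contra hne
    rcases lt_or_gt_of_ne hne with h | h
    · exact absurd (congrArg (fun z => (Zα z).re) heq) (ne_of_lt (hmono ht ht' h))
    · exact absurd (congrArg (fun z => (Zα z).re) heq) (ne_of_gt (hmono ht' ht h))
  have hKc : IsCompact (p '' Icc 0 1) := (isCompact_Icc).image_of_continuousOn hpc
  have hKΩ : p '' Icc 0 1 ⊆ Ω := by rintro x ⟨t, ht, rfl⟩; exact hpΩ t ht
  have hZK := zfinite hZloc hKc hKΩ
  have hbadfin : {t | t ∈ Icc (0:ℝ) 1 ∧ p t ∈ Zb}.Finite := by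
    apply Set.Finite.of_finite_image (f := p)
    · apply hZK.subset
      rintro x ⟨t, ⟨ht, htZ⟩, rfl⟩
      exact ⟨htZ, Set.mem_image_of_mem p ht⟩
    · exact hpinj.mono (fun t ht => ht.1)
  -- the local connection property
  have hlocal : ∀ t₀ ∈ Icc (0:ℝ) 1, ∃ δ > 0, ∀ t' s : ℝ, t' ∈ Icc (0:ℝ) 1 →
      s ∈ Icc (0:ℝ) 1 → |t' - t₀| < δ → |s - t₀| < δ → t' < s →
      p t' ∉ Zb → p s ∉ Zb →
      Relation.ReflTransGen (ZStep Ω Zb sq) (p t') (p s) := by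
    intro t₀ ht₀
    obtain ⟨r₁, r₂, ρ, g, hr₁, hr₂, hρ, hr₂₁, hcb, hg, hcons⟩ :=
      zchart hΩ hZα hsqne (hpΩ t₀ ht₀)
    have hfin := zfinite hZloc (isCompact_closedBall (p t₀) r₁) hcb
    obtain ⟨δ, hδ, hδball⟩ := Metric.continuousWithinAt_iff.1 (hpc t₀ ht₀) r₂ hr₂
    refine ⟨δ, hδ, ?_⟩
    intro t' s ht' hs hdt hds hlt htZ hsZ
    have hpt' : p t' ∈ ball (p t₀) r₂ := by
      rw [mem_ball]
      exact hδball ht' (by rwa [Real.dist_eq])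
    have hps : p s ∈ ball (p t₀) r₂ := by
      rw [mem_ball]
      exact hδball hs (by rwa [Real.dist_eq])
    exact zconnect hr₁ hρ hcb hg hcons hfin hpt' hps htZ hsZ (hmono ht' hs hlt)
  -- the reachable-parameter set
  set T := {t | t ∈ Icc (0:ℝ) 1 ∧ ∀ s ∈ Icc (0:ℝ) t, p s ∉ Zb →
    Relation.ReflTransGen (ZStep Ω Zb sq) a (p s)} with hTdef
  have h0T : (0:ℝ) ∈ T := by
    refine ⟨⟨le_rfl, zero_le_one⟩, ?_⟩
    intro s hs _
    have : s = 0 := le_antisymm hs.2 hs.1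
    rw [this, hp0]
  have hTne : T.Nonempty := ⟨0, h0T⟩
  have hbdd : BddAbove T := ⟨1, fun t ht => ht.1.2⟩
  set t₀ := sSup T with ht₀def
  have ht₀0 : 0 ≤ t₀ := le_csSup hbdd h0T
  have ht₀1 : t₀ ≤ 1 := csSup_le hTne (fun t ht => ht.1.2)
  have ht₀mem : t₀ ∈ Icc (0:ℝ) 1 := ⟨ht₀0, ht₀1⟩
  -- a good parameter slightly before u, reachable
  have hbefore : ∀ u ∈ Icc (0:ℝ) 1, ∀ δ > 0, u ≤ t₀ →
      ∃ t', t' ∈ Icc (0:ℝ) 1 ∧ t' ≤ t₀ ∧ |t' - u| < δ ∧ p t' ∉ Zb ∧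
        Relation.ReflTransGen (ZStep Ω Zb sq) a (p t') := by
    intro u hu δ hδ hut₀
    by_cases hu0 : u = 0
    · subst hu0
      refine ⟨0, ⟨le_rfl, zero_le_one⟩, ht₀0, by simpa using hδ, by rwa [hp0], by rw [hp0]⟩
    · have hupos : 0 < u := lt_of_le_of_ne hu.1 (Ne.symm hu0)
      set l := max 0 (u - δ) with hldef
      have hl : l < u := by
        rw [hldef]
        apply max_lt hupos (by linarith)
      obtain ⟨t', ht'I, ht'b⟩ : ∃ t' ∈ Ioo l u, t' ∉ {t | t ∈ Icc (0:ℝ) 1 ∧ p t ∈ Zb} := by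
        obtain ⟨t', ht'⟩ := ((Set.Ioo_infinite hl).diff hbadfin).nonempty
        exact ⟨t', ht'.1, ht'.2⟩
      have ht'Icc : t' ∈ Icc (0:ℝ) 1 := by
        constructor
        · exact le_of_lt (lt_of_le_of_lt (le_max_left _ _) ht'I.1)
        · exact le_of_lt (lt_of_lt_of_le ht'I.2 hu.2)
      have ht'Z : p t' ∉ Zb := fun h => ht'b ⟨ht'Icc, h⟩
      have ht'lt : t' < t₀ := lt_of_lt_of_le ht'I.2 hut₀
      obtain ⟨tT, htT, hlt⟩ := exists_lt_of_lt_csSup hTne ht'lt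
      refine ⟨t', ht'Icc, le_of_lt ht'lt, ?_, ht'Z, htT.2 t' ⟨ht'Icc.1, le_of_lt hlt⟩ ht'Z⟩
      rw [abs_lt]
      constructor
      · have : u - δ ≤ l := le_max_right _ _
        linarith [ht'I.1]
      · linarith [ht'I.2]
  -- sSup belongs to T
  have ht₀T : t₀ ∈ T := by
    refine ⟨ht₀mem, ?_⟩
    intro s hs hsZ
    rcases lt_or_eq_of_le hs.2 with hlt | heq
    · obtain ⟨tT, htT, hlt'⟩ := exists_lt_of_lt_csSup hTne hlt
      exact htT.2 s ⟨hs.1, le_of_lt hlt'⟩ hsZ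
    · -- s = t₀
      obtain ⟨δ, hδ, hconn⟩ := hlocal s ⟨hs.1, heq ▸ ht₀1⟩
      by_cases hs0 : s = 0
      · rw [hs0, hp0]
      · obtain ⟨t', ht'Icc, ht'le, ht'd, ht'Z, ht'R⟩ :=
          hbefore s ⟨hs.1, heq ▸ ht₀1⟩ δ hδ (le_of_eq heq)
        have ht'les : t' ≤ s := heq ▸ ht'le
        rcases eq_or_lt_of_le ht'les with h | h
        · rwa [← h]
        · refine Relation.ReflTransGen.trans ht'R ?_
          exact hconn t' s ht'Icc ⟨hs.1, heq ▸ ht₀1⟩ ht'd (by simpa using hδ) h ht'Z hsZ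
  -- sSup must be 1
  have ht₀eq1 : t₀ = 1 := by
    by_contra hne
    have hlt1 : t₀ < 1 := lt_of_le_of_ne ht₀1 hne
    obtain ⟨δ, hδ, hconn⟩ := hlocal t₀ ht₀mem
    obtain ⟨t', ht'Icc, ht'le, ht'd, ht'Z, ht'R⟩ := hbefore t₀ ht₀mem δ hδ le_rfl
    set u₁ := min 1 (t₀ + δ) with hu₁def
    have hu₁ : t₀ < u₁ := lt_min hlt1 (by linarith)
    set t₁ := (t₀ + u₁)/2 with ht₁def
    have ht₁gt : t₀ < t₁ := by rw [ht₁def]; linarith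
    have ht₁lt : t₁ < u₁ := by rw [ht₁def]; linarith
    have ht₁le1 : t₁ ≤ 1 := le_of_lt (lt_of_lt_of_le ht₁lt (min_le_left _ _))
    have ht₁T : t₁ ∈ T := by
      refine ⟨⟨le_trans ht₀0 (le_of_lt ht₁gt), ht₁le1⟩, ?_⟩
      intro s hs hsZ
      by_cases hst₀ : s ≤ t₀
      · exact ht₀T.2 s ⟨hs.1, hst₀⟩ hsZ
      · push_neg at hst₀
        have hsIcc : s ∈ Icc (0:ℝ) 1 := ⟨hs.1, le_trans hs.2 ht₁le1⟩
        have hsd : |s - t₀| < δ := by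
          rw [abs_lt]
          constructor
          · linarith
          · have h1 : s ≤ t₁ := hs.2
            have h2 : u₁ ≤ t₀ + δ := min_le_right _ _
            linarith
        refine Relation.ReflTransGen.trans ht'R ?_
        exact hconn t' s ht'Icc hsIcc ht'd hsd (lt_of_le_of_lt ht'le hst₀) ht'Z hsZ
    have := le_csSup hbdd ht₁T
    rw [← ht₀def] at this
    linarith
  have h1Icc : (1:ℝ) ∈ Icc (0:ℝ) t₀ := ⟨zero_le_one, le_of_eq ht₀eq1.symm⟩
  have := ht₀T.2 1 h1Icc (by rwa [hp1])
  rwa [hp1] at this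


lemma ratio_cont {Ω : Set ℂ} (hΩ : IsOpen Ω) {φ f g R : ℂ → ℂ}
    (hfd : ∀ x ∈ Ω, HasDerivAt f (φ x * g x + R x) x)
    (hRc : ContinuousOn R Ω) (hgc : ContinuousOn g Ω)
    {x₀ : ℂ} (hx₀ : x₀ ∈ Ω) (hgne : g x₀ ≠ 0) : ContinuousAt φ x₀ := by
  have hfdiff : DifferentiableOn ℂ f Ω :=
    fun x hx => ((hfd x hx).differentiableAt).differentiableWithinAt
  have hana : AnalyticOnNhd ℂ f Ω := hfdiff.analyticOnNhd hΩ
  have hDana : AnalyticOnNhd ℂ (deriv f) Ω := hana.deriv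
  have hDc : ContinuousAt (deriv f) x₀ := (hDana x₀ hx₀).continuousAt
  have hgca : ContinuousAt g x₀ := hgc.continuousAt (hΩ.mem_nhds hx₀)
  have hRca : ContinuousAt R x₀ := hRc.continuousAt (hΩ.mem_nhds hx₀)
  have hrat : ContinuousAt (fun x => (deriv f x - R x) / g x) x₀ :=
    (hDc.sub hRca).div hgca hgne
  apply hrat.congr
  filter_upwards [hΩ.mem_nhds hx₀, hgca.eventually_ne hgne] with y hy hgy
  have hd := (hfd y hy).deriv
  field_simp [hd]
  rw [hd]
  ring

lemma isolated_zeros {Ω : Set ℂ} (hΩ : IsOpen Ω) (hconn : IsPreconnected Ω) {f : ℂ → ℂ}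
    (hdf : DifferentiableOn ℂ f Ω) {p : ℂ} (hp : p ∈ Ω) (hfp : f p ≠ 0) :
    ∀ z ∈ Ω, ∃ ε > 0, ball z ε ⊆ Ω ∧ ∀ w ∈ ball z ε, w ≠ z → f w ≠ 0 := by
  intro z hz
  have hana : AnalyticOnNhd ℂ f Ω := hdf.analyticOnNhd hΩ
  rcases (hana z hz).eventually_eq_zero_or_eventually_ne_zero with hcase | hcase
  · exfalso
    have := hana.eqOn_zero_of_preconnected_of_eventuallyEq_zero hconn hz hcase
    exact hfp (this hp)
  · rw [eventually_nhdsWithin_iff] at hcase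
    obtain ⟨ε₁, hε₁, hball₁⟩ := Metric.eventually_nhds_iff.1 hcase
    obtain ⟨ε₂, hε₂, hball₂⟩ := Metric.isOpen_iff.1 hΩ z hz
    refine ⟨min ε₁ ε₂, lt_min hε₁ hε₂, ?_, ?_⟩
    · exact le_trans (ball_subset_ball (min_le_right _ _)) hball₂
    · intro w hw hne
      apply hball₁ (lt_of_lt_of_le (mem_ball.1 hw) (min_le_left _ _))
      simpa using hne

lemma ztame {Ω : Set ℂ} (hΩ : IsOpen Ω) (hconn : IsPreconnected Ω)
    {sq φ : ℂ → ℂ} (hsqc : ContinuousOn sq Ω) {h₀ : ℝ}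
    {up vp um vm : ℂ → ℂ} {pb qb : ℂ} (hpb : pb ∈ Ω) (hqb : qb ∈ Ω)
    (hupb : up pb = 1) (humb : um qb = 1)
    (hup : ∀ x ∈ Ω, HasDerivAt up (φ x * vp x) x)
    (hvp : ∀ x ∈ Ω, HasDerivAt vp (φ x * up x - 1 * (2 * sq x / (h₀:ℂ)) * vp x) x)
    (hum : ∀ x ∈ Ω, HasDerivAt um (φ x * vm x) x)
    (hvm : ∀ x ∈ Ω, HasDerivAt vm (φ x * um x - (-1) * (2 * sq x / (h₀:ℂ)) * vm x) x) :
    ∃ Zb : Set ℂ,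
      (∀ z ∈ Ω, ∃ ε > 0, ball z ε ⊆ Ω ∧ Zb ∩ ball z ε ⊆ {z}) ∧
      ContinuousOn φ (Ω \ Zb) ∧
      (∀ x, x ∈ Zb → up x = 0 ∧ um x = 0) := by
  set Zb : Set ℂ := {x | x ∈ Ω ∧ up x = 0 ∧ vp x = 0 ∧ um x = 0 ∧ vm x = 0} with hZbdef
  have hupdiff : DifferentiableOn ℂ up Ω :=
    fun x hx => ((hup x hx).differentiableAt).differentiableWithinAt
  have hupc : ContinuousOn up Ω := hupdiff.continuousOn
  have hvpc : ContinuousOn vp Ω :=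
    fun x hx => ((hvp x hx).differentiableAt).differentiableWithinAt.continuousWithinAt
  have humc : ContinuousOn um Ω :=
    fun x hx => ((hum x hx).differentiableAt).differentiableWithinAt.continuousWithinAt
  have hvmc : ContinuousOn vm Ω :=
    fun x hx => ((hvm x hx).differentiableAt).differentiableWithinAt.continuousWithinAt
  refine ⟨Zb, ?_, ?_, fun x hx => ⟨hx.2.1, hx.2.2.2.1⟩⟩
  · intro z hz
    obtain ⟨ε, hε, hball, hne⟩ := isolated_zeros hΩ hconn hupdiff hpb
      (by rw [hupb]; exact one_ne_zero) z hz
    refine ⟨ε, hε, hball, ?_⟩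
    intro w hw
    by_contra hne'
    simp only [mem_singleton_iff] at hne'
    exact (hne w hw.2 hne') hw.1.2.1
  · intro x₀ hx₀
    obtain ⟨hx₀Ω, hx₀Z⟩ := hx₀
    apply ContinuousAt.continuousWithinAt
    by_cases h1 : vp x₀ ≠ 0
    · exact ratio_cont hΩ (f := up) (g := vp) (R := fun _ => 0)
        (fun x hx => by simpa using hup x hx) continuousOn_const hvpc hx₀Ω h1
    by_cases h2 : up x₀ ≠ 0
    · refine ratio_cont hΩ (f := vp) (g := up)
        (R := fun x => - (2 * sq x / (h₀:ℂ)) * vp x) ?_ ?_ hupc hx₀Ω h2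
      · intro x hx
        have := hvp x hx
        apply this.congr_deriv
        ring
      · exact (((continuousOn_const.mul hsqc).div_const _).neg).mul hvpc
    by_cases h3 : vm x₀ ≠ 0
    · exact ratio_cont hΩ (f := um) (g := vm) (R := fun _ => 0)
        (fun x hx => by simpa using hum x hx) continuousOn_const hvmc hx₀Ω h3
    by_cases h4 : um x₀ ≠ 0
    · refine ratio_cont hΩ (f := vm) (g := um)
        (R := fun x => (2 * sq x / (h₀:ℂ)) * vm x) ?_ ?_ humc hx₀Ω h4
      · intro x hx
        have := hvm x hx
        apply this.congr_deriv
        ring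
      · exact ((continuousOn_const.mul hsqc).div_const _).mul hvmc
    push_neg at h1 h2 h3 h4
    exact absurd ⟨hx₀Ω, h2, h1, h4, h3⟩ hx₀Z



lemma wkb_endpoint {Ω : Set ℂ} (hΩ : IsOpen Ω) (hconn : IsPreconnected Ω)
    {sq Zα φ : ℂ → ℂ}
    (hZα : ∀ x ∈ Ω, HasDerivAt Zα (sq x) x)
    (hsqne : ∀ x ∈ Ω, sq x ≠ 0) (hsqc : ContinuousOn sq Ω)
    {a b : ℂ} (ha : a ∈ Ω) (hb : b ∈ Ω)
    (p : ℝ → ℂ) (hpc : ContinuousOn p (Icc 0 1)) (hpΩ : ∀ t ∈ Icc (0:ℝ) 1, p t ∈ Ω)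
    (hp0 : p 0 = a) (hp1 : p 1 = b)
    (hmono : StrictMonoOn (fun t => (Zα (p t)).re) (Icc 0 1))
    (h₀ : ℝ) (hh₀ : 0 < h₀)
    (we wo wem wom : ℝ → ℂ → ℂ)
    (hbase : ∀ h ∈ Ioc (0:ℝ) h₀, we h a = 1 ∧ wo h a = 0)
    (hbasem : wem h₀ b = 1)
    (hode : ∀ h ∈ Ioc (0:ℝ) h₀, (∀ x ∈ Ω, HasDerivAt (we h) (φ x * wo h x) x) ∧
        (∀ x ∈ Ω, HasDerivAt (wo h) (φ x * we h x - 1 * (2 * sq x / (h:ℂ)) * wo h x) x))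
    (hodem : (∀ x ∈ Ω, HasDerivAt (wem h₀) (φ x * wom h₀ x) x) ∧
        (∀ x ∈ Ω, HasDerivAt (wom h₀)
          (φ x * wem h₀ x - (-1) * (2 * sq x / (h₀:ℂ)) * wom h₀ x) x)) :
    ∃ C : ℝ, 0 < C ∧ ∃ h₁, h₁ ∈ Ioc (0:ℝ) h₀ ∧ ∀ h ∈ Ioc (0:ℝ) h₁,
      ‖we h b - 1‖ ≤ C * h ∧ ‖wo h b‖ ≤ C * h := by
  have hmem₀ : h₀ ∈ Ioc (0:ℝ) h₀ := ⟨hh₀, le_rfl⟩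
  obtain ⟨Zb, hZloc, hφc, hZmem⟩ := ztame hΩ hconn hsqc ha hb
    (hbase h₀ hmem₀).1 hbasem (hode h₀ hmem₀).1 (hode h₀ hmem₀).2 hodem.1 hodem.2
  have haZ : a ∉ Zb := by
    intro hmem
    have := (hZmem a hmem).1
    rw [(hbase h₀ hmem₀).1] at this
    exact one_ne_zero this
  have hbZ : b ∉ Zb := by
    intro hmem
    have := (hZmem b hmem).2
    rw [hbasem] at this
    exact one_ne_zero this
  have hchain := zpath hΩ hZα hsqne hZloc p hpc hpΩ hp0 hp1 hmono haZ hbZ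
  exact zchain_estimate hsqne hsqc hφc hchain h₀ hh₀ we wo hbase
    (fun h hm => ⟨(hode h hm).1,
      fun x hx => ((hode h hm).2 x hx).congr_deriv (by ring)⟩)


end WKBAux

open WKBAux Metric in
set_option maxHeartbeats 2000000 in
/-- **Lemma 3.1, first part:** `c₂ c̃₃ = 1 + O(h)` as `h → 0` (in both cases
`A(α) = A(β)` and `A(α) = -A(β)`). -/
theorem connection_coeff_c2_ct3
    (A : ℂ → ℂ) (δ lam0 α0 β0 : ℝ) (hA1 : ZSA1 A δ lam0 α0 β0)
    (lam : ℝ) (hnear : |lam - lam0| < lam0)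
    (α β : ℝ) (hαβ : α < β)
    (hα : A (α : ℂ) ^ 2 = ((lam : ℂ)) ^ 2) (hβ : A (β : ℂ) ^ 2 = ((lam : ℂ)) ^ 2)
    -- the cut plane `Ω` (a neighborhood of the Stokes region minus the two branch cuts)
    (Ω : Set ℂ) (hΩopen : IsOpen Ω) (hΩconn : IsPreconnected Ω)
    (hΩδ : Ω ⊆ {z : ℂ | |z.im| < δ})
    (hnv : ∀ x ∈ Ω, A x ^ 2 - (lam : ℂ) ^ 2 ≠ 0)
    -- the branches
    (sq H : ℂ → ℂ)
    (hsq : ∀ x ∈ Ω, sq x ^ 2 = A x ^ 2 - (lam : ℂ) ^ 2)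
    (hH : ∀ x ∈ Ω, H x ≠ 0 ∧ (H x) ^ 4 = (A x + lam) / (A x - lam))
    -- phases based at the turning points `α` and `β`
    (Zα Zβ : ℂ → ℂ)
    (hZα : ∀ x ∈ Ω, HasDerivAt Zα (sq x) x)
    (hZβ : ∀ x ∈ Ω, HasDerivAt Zβ (sq x) x)
    -- the base points, one in each sector
    (x₁ x₂ x₃ x₄ : ℂ) (hx₁ : x₁ ∈ Ω) (hx₂ : x₂ ∈ Ω) (hx₃ : x₃ ∈ Ω) (hx₄ : x₄ ∈ Ω)
    -- sector structure: monotone paths `Γ(x₁,x₃)`, `Γ(x₂,x₃)`, `Γ(x₂,x₄)`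
    (hp13 : MonoPath Ω (fun z => (Zα z).re) x₁ x₃)
    (hp23 : MonoPath Ω (fun z => (Zα z).re) x₂ x₃)
    (hp24 : MonoPath Ω (fun z => (Zα z).re) x₂ x₄)
    -- WKB series of `u₁, u₂ (and ũ₂), u₃ (and ũ₃), u₄`, for each `0 < h ≤ h₀`
    (h₀ : ℝ) (hh₀ : 0 < h₀)
    (we₁ wo₁ we₂ wo₂ we₃ wo₃ we₄ wo₄ : ℝ → ℂ → ℂ)
    (hw₁ : ∀ h ∈ Ioc (0:ℝ) h₀, IsWKBSum Ω h 1 sq H x₁ (we₁ h) (wo₁ h))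
    (hw₂ : ∀ h ∈ Ioc (0:ℝ) h₀, IsWKBSum Ω h 1 sq H x₂ (we₂ h) (wo₂ h))
    (hw₃ : ∀ h ∈ Ioc (0:ℝ) h₀, IsWKBSum Ω h (-1) sq H x₃ (we₃ h) (wo₃ h))
    (hw₄ : ∀ h ∈ Ioc (0:ℝ) h₀, IsWKBSum Ω h (-1) sq H x₄ (we₄ h) (wo₄ h))
    -- the connection coefficients: `u₁ = c₂ u₂ + c₃ u₃` and `u₄ = c̃₂ ũ₂ + c̃₃ ũ₃`
    (c₂ c₃ ct₂ ct₃ : ℝ → ℂ)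
    (hcomb₁ : ∀ h ∈ Ioc (0:ℝ) h₀, ∀ x ∈ Ω,
      wkbPlus h Zα H (we₁ h) (wo₁ h) x
        = c₂ h • wkbPlus h Zα H (we₂ h) (wo₂ h) x
          + c₃ h • wkbMinus h Zα H (we₃ h) (wo₃ h) x)
    (hcomb₄ : ∀ h ∈ Ioc (0:ℝ) h₀, ∀ x ∈ Ω,
      wkbMinus h Zβ H (we₄ h) (wo₄ h) x
        = ct₂ h • wkbPlus h Zβ H (we₂ h) (wo₂ h) x
          + ct₃ h • wkbMinus h Zβ H (we₃ h) (wo₃ h) x) :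
    ∃ C : ℝ, 0 < C ∧ ∃ h₁ ∈ Ioc (0:ℝ) h₀,
      ∀ h ∈ Ioc (0:ℝ) h₁, ‖c₂ h * ct₃ h - 1‖ ≤ C * h := by
  -- nonvanishing and continuity of `sq`
  have hsqne : ∀ x ∈ Ω, sq x ≠ 0 := by
    intro x hx h
    apply hnv x hx
    rw [← hsq x hx, h]
    ring
  have hsqc : ContinuousOn sq Ω := by
    intro x hx
    apply ContinuousAt.continuousWithinAt
    have hZd : DifferentiableOn ℂ Zα Ω :=
      fun y hy => (hZα y hy).differentiableAt.differentiableWithinAt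
    have hana : AnalyticOnNhd ℂ Zα Ω := hZd.analyticOnNhd hΩopen
    have hDc : ContinuousAt (deriv Zα) x := (hana.deriv x hx).continuousAt
    apply hDc.congr
    filter_upwards [hΩopen.mem_nhds hx] with y hy using ((hZα y hy).deriv)
  have hmem₀ : h₀ ∈ Ioc (0:ℝ) h₀ := ⟨hh₀, le_rfl⟩
  -- repackage the WKB ODEs
  have hode1 : ∀ h ∈ Ioc (0:ℝ) h₀,
      (∀ x ∈ Ω, HasDerivAt (we₁ h) ((fun x => deriv H x / H x) x * wo₁ h x) x) ∧
      (∀ x ∈ Ω, HasDerivAt (wo₁ h) ((fun x => deriv H x / H x) x * we₁ h x -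
        1 * (2 * sq x / (h:ℂ)) * wo₁ h x) x) :=
    fun h hm => ⟨fun x hx => ((hw₁ h hm).2.2 x hx).1, fun x hx => ((hw₁ h hm).2.2 x hx).2⟩
  have hode2 : ∀ h ∈ Ioc (0:ℝ) h₀,
      (∀ x ∈ Ω, HasDerivAt (we₂ h) ((fun x => deriv H x / H x) x * wo₂ h x) x) ∧
      (∀ x ∈ Ω, HasDerivAt (wo₂ h) ((fun x => deriv H x / H x) x * we₂ h x -
        1 * (2 * sq x / (h:ℂ)) * wo₂ h x) x) :=
    fun h hm => ⟨fun x hx => ((hw₂ h hm).2.2 x hx).1, fun x hx => ((hw₂ h hm).2.2 x hx).2⟩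
  have hode3 : ∀ h ∈ Ioc (0:ℝ) h₀,
      (∀ x ∈ Ω, HasDerivAt (we₃ h) ((fun x => deriv H x / H x) x * wo₃ h x) x) ∧
      (∀ x ∈ Ω, HasDerivAt (wo₃ h) ((fun x => deriv H x / H x) x * we₃ h x -
        (-1) * (2 * sq x / (h:ℂ)) * wo₃ h x) x) :=
    fun h hm => ⟨fun x hx => ((hw₃ h hm).2.2 x hx).1, fun x hx => ((hw₃ h hm).2.2 x hx).2⟩
  have hode4 : ∀ h ∈ Ioc (0:ℝ) h₀,
      (∀ x ∈ Ω, HasDerivAt (we₄ h) ((fun x => deriv H x / H x) x * wo₄ h x) x) ∧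
      (∀ x ∈ Ω, HasDerivAt (wo₄ h) ((fun x => deriv H x / H x) x * we₄ h x -
        (-1) * (2 * sq x / (h:ℂ)) * wo₄ h x) x) :=
    fun h hm => ⟨fun x hx => ((hw₄ h hm).2.2 x hx).1, fun x hx => ((hw₄ h hm).2.2 x hx).2⟩
  have hbase1 : ∀ h ∈ Ioc (0:ℝ) h₀, we₁ h x₁ = 1 ∧ wo₁ h x₁ = 0 :=
    fun h hm => ⟨(hw₁ h hm).1, (hw₁ h hm).2.1⟩
  have hbase2 : ∀ h ∈ Ioc (0:ℝ) h₀, we₂ h x₂ = 1 ∧ wo₂ h x₂ = 0 :=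
    fun h hm => ⟨(hw₂ h hm).1, (hw₂ h hm).2.1⟩
  -- the three endpoint estimates
  obtain ⟨p13, hp13c, hp13Ω, hp13a, hp13b, hp13m⟩ := hp13
  obtain ⟨p23, hp23c, hp23Ω, hp23a, hp23b, hp23m⟩ := hp23
  obtain ⟨p24, hp24c, hp24Ω, hp24a, hp24b, hp24m⟩ := hp24
  obtain ⟨C₁, hC₁, h₁a, hh₁a, hbnd1⟩ := wkb_endpoint hΩopen hΩconn hZα hsqne hsqc hx₁ hx₃
    p13 hp13c hp13Ω hp13a hp13b hp13m h₀ hh₀ we₁ wo₁ we₃ wo₃ hbase1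
    (hw₃ h₀ hmem₀).1 hode1 (hode3 h₀ hmem₀)
  obtain ⟨C₂, hC₂, h₁b, hh₁b, hbnd2⟩ := wkb_endpoint hΩopen hΩconn hZα hsqne hsqc hx₂ hx₃
    p23 hp23c hp23Ω hp23a hp23b hp23m h₀ hh₀ we₂ wo₂ we₃ wo₃ hbase2
    (hw₃ h₀ hmem₀).1 hode2 (hode3 h₀ hmem₀)
  obtain ⟨C₃, hC₃, h₁c, hh₁c, hbnd3⟩ := wkb_endpoint hΩopen hΩconn hZα hsqne hsqc hx₂ hx₄
    p24 hp24c hp24Ω hp24a hp24b hp24m h₀ hh₀ we₂ wo₂ we₄ wo₄ hbase2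
    (hw₄ h₀ hmem₀).1 hode2 (hode4 h₀ hmem₀)
  set S : ℝ := C₁ + C₂ + C₃ with hSdef
  have hS : 0 < S := by positivity
  have hminpos : 0 < min (min h₁a h₁b) (min h₁c (1/(4*S))) :=
    lt_min (lt_min hh₁a.1 hh₁b.1) (lt_min hh₁c.1 (by positivity))
  refine ⟨12*S + 1, by positivity, min (min h₁a h₁b) (min h₁c (1/(4*S))),
    ⟨hminpos, le_trans (le_trans (min_le_left _ _) (min_le_left _ _)) hh₁a.2⟩, ?_⟩
  intro h hh
  have hh0 : 0 < h := hh.1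
  have hma : h ∈ Ioc (0:ℝ) h₁a :=
    ⟨hh0, le_trans hh.2 (le_trans (min_le_left _ _) (min_le_left _ _))⟩
  have hmb : h ∈ Ioc (0:ℝ) h₁b :=
    ⟨hh0, le_trans hh.2 (le_trans (min_le_left _ _) (min_le_right _ _))⟩
  have hmc : h ∈ Ioc (0:ℝ) h₁c :=
    ⟨hh0, le_trans hh.2 (le_trans (min_le_right _ _) (min_le_left _ _))⟩
  have hsmall : h ≤ 1/(4*S) := le_trans hh.2 (le_trans (min_le_right _ _) (min_le_right _ _))
  have hmemh₀ : h ∈ Ioc (0:ℝ) h₀ := ⟨hh0, le_trans hma.2 hh₁a.2⟩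
  have hSh : S*h ≤ 1/4 := by
    have := mul_le_mul_of_nonneg_left hsmall hS.le
    calc S*h ≤ S*(1/(4*S)) := this
      _ = 1/4 := by
          rw [mul_one_div, div_eq_iff (by positivity : (4:ℝ)*S ≠ 0)]
          ring
  obtain ⟨b1, _⟩ := hbnd1 h hma
  obtain ⟨b2, _⟩ := hbnd2 h hmb
  obtain ⟨b3, _⟩ := hbnd3 h hmc
  have hq1 : ‖we₁ h x₃ - 1‖ ≤ 1/4 := by
    refine le_trans b1 (le_trans ?_ hSh)
    have : (C₁:ℝ) ≤ S := by rw [hSdef]; linarith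
    exact mul_le_mul_of_nonneg_right this hh0.le
  have hq2 : ‖we₂ h x₃ - 1‖ ≤ 1/4 := by
    refine le_trans b2 (le_trans ?_ hSh)
    have : (C₂:ℝ) ≤ S := by rw [hSdef]; linarith
    exact mul_le_mul_of_nonneg_right this hh0.le
  have hq3 : ‖we₂ h x₄ - 1‖ ≤ 1/4 := by
    refine le_trans b3 (le_trans ?_ hSh)
    have : (C₃:ℝ) ≤ S := by rw [hSdef]; linarith
    exact mul_le_mul_of_nonneg_right this hh0.le
  -- algebraic relations between the connection coefficients and the series
  have hrel1 : we₁ h x₃ = c₂ h * we₂ h x₃ :=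
    comb_extract (hH x₃ hx₃).1 (hw₃ h hmemh₀).1 (hw₃ h hmemh₀).2.1 (hcomb₁ h hmemh₀ x₃ hx₃)
  have hrel2 : we₄ h x₂ = ct₃ h * we₃ h x₂ :=
    comb_extract' (hH x₂ hx₂).1 (hw₂ h hmemh₀).1 (hw₂ h hmemh₀).2.1 (hcomb₄ h hmemh₀ x₂ hx₂)
  have hconst23 := cross_const hΩopen hΩconn
    (fun x hx => ((hw₂ h hmemh₀).2.2 x hx).1) (fun x hx => ((hw₂ h hmemh₀).2.2 x hx).2)
    (fun x hx => ((hw₃ h hmemh₀).2.2 x hx).1) (fun x hx => ((hw₃ h hmemh₀).2.2 x hx).2)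
    hx₂ hx₃
  rw [(hw₂ h hmemh₀).1, (hw₂ h hmemh₀).2.1, (hw₃ h hmemh₀).1, (hw₃ h hmemh₀).2.1] at hconst23
  have hBv : we₃ h x₂ = we₂ h x₃ := by
    simpa using hconst23
  have hconst24 := cross_const hΩopen hΩconn
    (fun x hx => ((hw₂ h hmemh₀).2.2 x hx).1) (fun x hx => ((hw₂ h hmemh₀).2.2 x hx).2)
    (fun x hx => ((hw₄ h hmemh₀).2.2 x hx).1) (fun x hx => ((hw₄ h hmemh₀).2.2 x hx).2)
    hx₄ hx₂
  rw [(hw₂ h hmemh₀).1, (hw₂ h hmemh₀).2.1, (hw₄ h hmemh₀).1, (hw₄ h hmemh₀).2.1] at hconst24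
  have hD2 : we₂ h x₄ = ct₃ h * we₂ h x₃ := by
    have h24 : we₂ h x₄ = we₄ h x₂ := by simpa using hconst24
    rw [h24, hrel2, hBv]
  have key : (c₂ h * ct₃ h - 1) * (we₂ h x₃ * we₂ h x₃)
      = we₁ h x₃ * we₂ h x₄ - we₂ h x₃ * we₂ h x₃ := by
    linear_combination (-(we₂ h x₄)) * hrel1 + (-(c₂ h * we₂ h x₃)) * hD2
  -- norm estimates
  have hBlow : (1:ℝ)/2 ≤ ‖we₂ h x₃‖ := by
    have h1 : ‖(1:ℂ)‖ - ‖we₂ h x₃‖ ≤ ‖(1:ℂ) - we₂ h x₃‖ := norm_sub_norm_le _ _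
    rw [norm_one, norm_sub_rev] at h1
    linarith
  have hDub : ‖we₂ h x₄‖ ≤ 2 := by
    calc ‖we₂ h x₄‖ = ‖(we₂ h x₄ - 1) + 1‖ := by ring_nf
      _ ≤ ‖we₂ h x₄ - 1‖ + ‖(1:ℂ)‖ := norm_add_le _ _
      _ ≤ 2 := by rw [norm_one]; linarith
  have hBub : ‖we₂ h x₃ + 1‖ ≤ 3 := by
    calc ‖we₂ h x₃ + 1‖ = ‖(we₂ h x₃ - 1) + 2‖ := by ring_nf
      _ ≤ ‖we₂ h x₃ - 1‖ + ‖(2:ℂ)‖ := norm_add_le _ _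
      _ ≤ 3 := by
          have : ‖(2:ℂ)‖ = 2 := by norm_num
          rw [this]; linarith
  have hADB : ‖we₁ h x₃ * we₂ h x₄ - we₂ h x₃ * we₂ h x₃‖ ≤ 3*S*h := by
    have hid : we₁ h x₃ * we₂ h x₄ - we₂ h x₃ * we₂ h x₃
        = (we₁ h x₃ - 1) * we₂ h x₄ + (we₂ h x₄ - 1)
          - (we₂ h x₃ - 1) * (we₂ h x₃ + 1) := by ring
    rw [hid]
    have e1 : ‖(we₁ h x₃ - 1) * we₂ h x₄‖ ≤ C₁*h*2 := by
      rw [norm_mul]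
      exact mul_le_mul b1 hDub (norm_nonneg _) (by positivity)
    have e2 : ‖(we₂ h x₃ - 1) * (we₂ h x₃ + 1)‖ ≤ C₂*h*3 := by
      rw [norm_mul]
      exact mul_le_mul b2 hBub (norm_nonneg _) (by positivity)
    calc ‖(we₁ h x₃ - 1) * we₂ h x₄ + (we₂ h x₄ - 1)
          - (we₂ h x₃ - 1) * (we₂ h x₃ + 1)‖
        ≤ ‖(we₁ h x₃ - 1) * we₂ h x₄ + (we₂ h x₄ - 1)‖
          + ‖(we₂ h x₃ - 1) * (we₂ h x₃ + 1)‖ := norm_sub_le _ _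
      _ ≤ ‖(we₁ h x₃ - 1) * we₂ h x₄‖ + ‖we₂ h x₄ - 1‖
          + ‖(we₂ h x₃ - 1) * (we₂ h x₃ + 1)‖ := by
          linarith [norm_add_le ((we₁ h x₃ - 1) * we₂ h x₄) (we₂ h x₄ - 1)]
      _ ≤ C₁*h*2 + C₃*h + C₂*h*3 := by linarith
      _ ≤ 3*S*h := by
          rw [hSdef]
          nlinarith [mul_nonneg hC₁.le hh0.le, mul_nonneg hC₂.le hh0.le,
            mul_nonneg hC₃.le hh0.le]
  have hnorm : ‖c₂ h * ct₃ h - 1‖ * (‖we₂ h x₃‖ * ‖we₂ h x₃‖)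
      = ‖we₁ h x₃ * we₂ h x₄ - we₂ h x₃ * we₂ h x₃‖ := by
    rw [← key, norm_mul, norm_mul]
  have h14 : (1:ℝ)/4 ≤ ‖we₂ h x₃‖ * ‖we₂ h x₃‖ := by nlinarith [hBlow, norm_nonneg (we₂ h x₃)]
  have hfin : ‖c₂ h * ct₃ h - 1‖ * (1/4) ≤ 3*S*h := by
    calc ‖c₂ h * ct₃ h - 1‖ * (1/4)
        ≤ ‖c₂ h * ct₃ h - 1‖ * (‖we₂ h x₃‖ * ‖we₂ h x₃‖) :=
          mul_le_mul_of_nonneg_left h14 (norm_nonneg _)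
      _ = ‖we₁ h x₃ * we₂ h x₄ - we₂ h x₃ * we₂ h x₃‖ := hnorm
      _ ≤ 3*S*h := hADB
  nlinarith [norm_nonneg (c₂ h * ct₃ h - 1), hh0.le]


end
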